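/- arXiv:2005.07187 — 3 statements merged into one kernel-verified Lean document; each statement's English description precedes it below -/
import Mathlib

section
/- Let P be an n-element poset with n ≥ 2 whose connected components P_1, …, P_r each have a unique minimal element. Then the number of tangled labelings of P is (n − r) · (n − 2)!. -/
open scoped Classical

noncomputable section

abbrev Labeling (P : Type*) [Fintype P] : Type _ := P ≃ Fin (Fintype.card P)

variable {P : Type*} [Fintype P] [PartialOrder P]

def IsLinearExt (L : Labeling P) : Prop := ∀ x y : P, x ≤ y → L x ≤ L y

def lSucc (L : Labeling P) (v : P)
    (h : (Finset.univ.filter fun y => v < y).Nonempty) : P :=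
  L.symm (((Finset.univ.filter fun y => v < y).image L).min' (h.image _))

lemma lt_lSucc (L : Labeling P) (v : P)
    (h : (Finset.univ.filter fun y => v < y).Nonempty) : v < lSucc L v h := by
  have hmem := Finset.min'_mem ((Finset.univ.filter fun y => v < y).image L) (h.image _)
  obtain ⟨y, hy, hLy⟩ := Finset.mem_image.mp hmem
  have heq : lSucc L v h = y := by
    unfold lSucc
    rw [← hLy, Equiv.symm_apply_apply]
  rw [heq]
  exact (Finset.mem_filter.mp hy).2

def promChainFrom (L : Labeling P) (v : P) : List P :=
  if h : (Finset.univ.filter fun y => v < y).Nonempty then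
    v :: promChainFrom L (lSucc L v h)
  else [v]
termination_by (Finset.univ.filter fun y => v < y).card
decreasing_by
  apply Finset.card_lt_card
  refine (Finset.ssubset_iff_of_subset ?_).mpr ?_
  · intro z hz
    simp only [Finset.mem_filter, Finset.mem_univ, true_and] at *
    exact lt_trans (lt_lSucc L v h) hz
  · exact ⟨lSucc L v h, by simp [lt_lSucc L v h], by simp⟩

def promote (L : Labeling P) : Labeling P :=
  if h : Nonempty P then
    ((List.formPerm (promChainFrom L (L.symm ⟨0, @Fintype.card_pos P _ h⟩))).trans L).trans
      (finRotate (Fintype.card P)).symm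
  else L

/-- The label of `x` under `L`, as an integer in `{1, …, n}`. -/
def labelOf (L : Labeling P) (x : P) : ℕ := (L x : ℕ) + 1

/-- The largest `a ∈ {0, …, n}` such that for all `j ∈ {n−a+1, …, n}`, the set
`{x ∈ P : j ≤ L(x) ≤ n}` is an upper order ideal of `P`. -/
def frozenA (L : Labeling P) : ℕ :=
  sSup {a : ℕ | a ≤ Fintype.card P ∧
    ∀ j, Fintype.card P - a + 1 ≤ j → j ≤ Fintype.card P →
      IsUpperSet {x : P | j ≤ labelOf L x ∧ labelOf L x ≤ Fintype.card P}}

/-- `x` is frozen with respect to `L` if `n − a + 1 ≤ L(x) ≤ n`, where `a` is as in `frozenA`. -/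
def IsFrozen (L : Labeling P) (x : P) : Prop :=
  Fintype.card P - frozenA L + 1 ≤ labelOf L x

/-- A labeling of an `n`-element poset is tangled if `n ≥ 2` and `∂^{n−2}(L)` is
not a linear extension. -/
def IsTangled (L : Labeling P) : Prop :=
  2 ≤ Fintype.card P ∧ ¬ IsLinearExt (promote^[Fintype.card P - 2] L)

/-- A labeling of an `n`-element poset is `k`-untangled if `n ≥ k + 2` and
`∂^{n−k−2}(L)` is not a linear extension. -/
def IsUntangled (k : ℕ) (L : Labeling P) : Prop :=
  k + 2 ≤ Fintype.card P ∧ ¬ IsLinearExt (promote^[Fintype.card P - k - 2] L)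

/-- The comparability graph of a poset. -/
def compGraph (P : Type*) [PartialOrder P] : SimpleGraph P where
  Adj x y := x ≠ y ∧ (x ≤ y ∨ y ≤ x)
  symm := by
    constructor
    intro x y hxy
    exact ⟨hxy.1.symm, hxy.2.symm⟩
  loopless := by
    constructor
    intro x hx
    exact hx.1 rfl

/-- The standardization of an injective map from a finite type into a linear order:
the unique relabeling by `{1, …, n}` with the same relative order of values. -/
def standardize {R β : Type*} [Fintype R] [LinearOrder β]
    (f : R → β) (hf : Function.Injective f) : R ≃ Fin (Fintype.card R) :=
  have hcard : (Finset.univ.image f).card = Fintype.card R := by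
    rw [Finset.card_image_of_injective _ hf, Finset.card_univ]
  (Equiv.ofBijective (fun x => (⟨f x, by simp⟩ : ↥(Finset.univ.image f)))
    (by
      rw [Fintype.bijective_iff_injective_and_card]
      refine ⟨fun a b hab => hf (congrArg Subtype.val hab), ?_⟩
      rw [Fintype.card_coe, hcard])).trans
    ((Finset.univ.image f).orderIsoOfFin hcard).symm.toEquiv

/-- The toggle operator `τ_{k+1}`: it swaps the labels `k+1` and `k+2` (i.e. the
`Fin`-labels `k` and `k+1`) unless `L⁻¹(k+1) <_P L⁻¹(k+2)`. -/
def toggle (L : Labeling P) (k : ℕ) : Labeling P :=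
  if h : k + 1 < Fintype.card P then
    if L.symm ⟨k, Nat.lt_of_succ_lt h⟩ < L.symm ⟨k + 1, h⟩ then L
    else L.trans (Equiv.swap ⟨k, Nat.lt_of_succ_lt h⟩ ⟨k + 1, h⟩)
  else L

/-- An element `x` is `L`-golden if every element strictly above it has a larger label. -/
def IsGolden (L : Labeling P) (x : P) : Prop := ∀ y : P, x < y → L x < L y

/-- The largest label `n` of an `n`-element poset, as an element of `Fin n`. -/
def topFin (P : Type*) [Fintype P] [Nonempty P] : Fin (Fintype.card P) :=
  ⟨Fintype.card P - 1, Nat.sub_lt Fintype.card_pos Nat.one_pos⟩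

namespace Tangled

variable (L : Labeling P)

lemma promChainFrom_eq (v : P) : promChainFrom L v =
    if h : (Finset.univ.filter fun y => v < y).Nonempty then
      v :: promChainFrom L (lSucc L v h)
    else [v] := by rw [promChainFrom]

lemma promChainFrom_ne_nil (v : P) : promChainFrom L v ≠ [] := by
  rw [promChainFrom_eq]; split <;> simp

lemma promChainFrom_head? (v : P) : (promChainFrom L v).head? = some v := by
  rw [promChainFrom_eq]; split <;> rfl

lemma head_promChainFrom (v : P) :
    (promChainFrom L v).head (promChainFrom_ne_nil L v) = v := by
  have h1 := List.head?_eq_head (promChainFrom_ne_nil L v)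
  have h2 := promChainFrom_head? L v
  rw [h1] at h2
  exact Option.some_injective _ h2

lemma lSucc_min (v : P) (h : (Finset.univ.filter fun y => v < y).Nonempty) :
    ∀ q, v < q → L (lSucc L v h) ≤ L q := by
  intro q hq
  unfold lSucc
  rw [Equiv.apply_symm_apply]
  exact Finset.min'_le _ _ (Finset.mem_image.mpr ⟨q, by simp [hq], rfl⟩)

lemma head_le_of_mem_promChainFrom {v x : P} (hx : x ∈ promChainFrom L v) : v ≤ x := by
  induction v using promChainFrom.induct (L := L) with
  | case1 v h ih =>
    rw [promChainFrom_eq, dif_pos h] at hx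
    rcases List.mem_cons.mp hx with rfl | hx
    · exact le_refl x
    · exact le_of_lt (lt_of_lt_of_le (lt_lSucc L v h) (ih hx))
  | case2 v h =>
    rw [promChainFrom_eq, dif_neg h] at hx
    simp at hx; subst hx; exact le_refl x

lemma chain'_promChainFrom (v : P) : List.Chain' (· < ·) (promChainFrom L v) := by
  induction v using promChainFrom.induct (L := L) with
  | case1 v h ih =>
    rw [promChainFrom_eq, dif_pos h]
    refine List.isChain_cons.mpr ⟨?_, ih⟩
    intro y hy
    rw [promChainFrom_head? L (lSucc L v h)] at hy
    cases hy
    exact lt_lSucc L v h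
  | case2 v h =>
    rw [promChainFrom_eq, dif_neg h]; exact List.isChain_singleton v

lemma nodup_promChainFrom (v : P) : (promChainFrom L v).Nodup :=
  (List.isChain_iff_pairwise.mp (chain'_promChainFrom L v)).imp ne_of_lt

lemma getLast?_maximal (v : P) {w : P}
    (hw : (promChainFrom L v).getLast? = some w) (q : P) : ¬ w < q := by
  induction v using promChainFrom.induct (L := L) with
  | case1 v h ih =>
    rw [promChainFrom_eq, dif_pos h] at hw
    obtain ⟨b, l, hbl⟩ := List.exists_cons_of_ne_nil (promChainFrom_ne_nil L (lSucc L v h))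
    rw [hbl, List.getLast?_cons_cons] at hw
    exact ih (by rw [hbl]; exact hw)
  | case2 v h =>
    rw [promChainFrom_eq, dif_neg h] at hw
    simp only [List.getLast?_singleton, Option.some.injEq] at hw
    subst hw
    intro hq
    exact h ⟨q, by simp [hq]⟩

lemma getLast_maximal (v : P) (q : P) :
    ¬ ((promChainFrom L v).getLast (promChainFrom_ne_nil L v) < q) :=
  getLast?_maximal L v (List.getLast?_eq_getLast _) q

lemma promChainFrom_getElem_succ (v : P) (i : ℕ)
    (h : i + 1 < (promChainFrom L v).length) :
    ∃ hne, (promChainFrom L v)[i+1]'h =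
      lSucc L ((promChainFrom L v)[i]'(Nat.lt_of_succ_lt h)) hne := by
  induction v using promChainFrom.induct (L := L) generalizing i with
  | case1 v hv ih =>
    have he : promChainFrom L v = v :: promChainFrom L (lSucc L v hv) := by
      rw [promChainFrom_eq, dif_pos hv]
    simp only [he] at h ⊢
    rcases i with _ | j
    · simp only [List.getElem_cons_succ, List.getElem_cons_zero]
      refine ⟨hv, ?_⟩
      rw [List.getElem_zero, head_promChainFrom]
    · simp only [List.getElem_cons_succ]
      exact ih j (by simpa using h)
  | case2 v hv =>
    have he : promChainFrom L v = [v] := by rw [promChainFrom_eq, dif_neg hv]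
    simp only [he] at h
    simp at h

lemma formPerm_promChainFrom {v x : P} (hx : x ∈ promChainFrom L v)
    (hlast : x ≠ (promChainFrom L v).getLast (promChainFrom_ne_nil L v)) :
    x < (promChainFrom L v).formPerm x ∧
      (promChainFrom L v).formPerm x ∈ promChainFrom L v ∧
      ∀ q, x < q → L ((promChainFrom L v).formPerm x) ≤ L q := by
  obtain ⟨i, hi, rfl⟩ := List.getElem_of_mem hx
  have hlen : i + 1 < (promChainFrom L v).length := by
    rcases Nat.lt_or_ge (i+1) (promChainFrom L v).length with h | h
    · exact h
    · exfalso
      apply hlast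
      rw [List.getLast_eq_getElem]
      congr 1
      omega
  rw [List.formPerm_apply_getElem _ (nodup_promChainFrom L v) i hi]
  have hmod : (i + 1) % (promChainFrom L v).length = i + 1 := Nat.mod_eq_of_lt hlen
  obtain ⟨hne, hsucc⟩ := promChainFrom_getElem_succ L v i hlen
  constructor
  · simp only [hmod]
    rw [hsucc]
    exact lt_lSucc _ _ _
  constructor
  · exact List.getElem_mem _
  · intro q hq
    have : (promChainFrom L v)[(i + 1) % (promChainFrom L v).length]'(by omega) =
        lSucc L ((promChainFrom L v)[i]'hi) hne := by
      simp only [hmod]; exact hsucc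
    rw [this]
    exact lSucc_min L _ hne q hq

lemma length_pos_promChainFrom (v : P) : 0 < (promChainFrom L v).length :=
  List.length_pos_iff.mpr (promChainFrom_ne_nil L v)

lemma mem_promChainFrom_cases {v x : P} (hx : x ∈ promChainFrom L v) :
    x = v ∨ ∃ p, p < x := by
  obtain ⟨i, hi, rfl⟩ := List.getElem_of_mem hx
  rcases i with _ | j
  · left
    rw [List.getElem_zero, head_promChainFrom]
  · right
    obtain ⟨hne, hsucc⟩ := promChainFrom_getElem_succ L v j hi
    exact ⟨(promChainFrom L v)[j]'(by omega), by rw [hsucc]; exact lt_lSucc _ _ _⟩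

lemma formPerm_getLast_promChainFrom (v : P) :
    (promChainFrom L v).formPerm ((promChainFrom L v).getLast (promChainFrom_ne_nil L v)) = v := by
  have hl := length_pos_promChainFrom L v
  rw [List.getLast_eq_getElem, List.formPerm_apply_getElem _ (nodup_promChainFrom L v) _ (by omega)]
  have : ((promChainFrom L v).length - 1 + 1) % (promChainFrom L v).length = 0 := by
    have : (promChainFrom L v).length - 1 + 1 = (promChainFrom L v).length := by omega
    rw [this, Nat.mod_self]
  simp only [this]
  rw [List.getElem_zero, head_promChainFrom]

lemma formPerm_symm_promChainFrom (v : P) (y : P) (hy : y ≠ v) :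
    ((promChainFrom L v).formPerm.symm y = y) ∨
    ((promChainFrom L v).formPerm.symm y < y ∧
      (((promChainFrom L v).formPerm.symm y = v) ∨ (∃ p, p < (promChainFrom L v).formPerm.symm y)) ∧
      ∀ q, (promChainFrom L v).formPerm.symm y < q → L y ≤ L q) := by
  set c := promChainFrom L v with hc
  set p := c.formPerm.symm y with hp
  have hfp : c.formPerm p = y := by rw [hp, Equiv.apply_symm_apply]
  by_cases hpc : p ∈ c
  · by_cases hplast : p = c.getLast (promChainFrom_ne_nil L v)
    · exfalso
      apply hy
      rw [← hfp, hplast]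
      exact formPerm_getLast_promChainFrom L v
    · obtain ⟨h1, h2, h3⟩ := formPerm_promChainFrom L hpc hplast
      right
      rw [hfp] at h1 h3
      exact ⟨h1, mem_promChainFrom_cases L hpc, h3⟩
  · left
    have : c.formPerm p = p := List.formPerm_apply_of_notMem hpc
    rw [hfp] at this
    exact (this.trans hp).symm

lemma finRotate_mk {n k : ℕ} (hk : k + 1 < n) :
    finRotate n ⟨k, by omega⟩ = ⟨k + 1, hk⟩ := by
  cases n with
  | zero => omega
  | succ m =>
    rw [finRotate_succ_apply]
    have hlt : (⟨k, by omega⟩ : Fin (m+1)) < Fin.last m := by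
      rw [Fin.lt_def]; simp [Fin.last]; omega
    apply Fin.ext
    rw [Fin.val_add_one_of_lt hlt]

lemma finRotate_symm_mk {n k : ℕ} (hk : k + 1 < n) :
    (finRotate n).symm ⟨k + 1, hk⟩ = ⟨k, by omega⟩ :=
  (Equiv.symm_apply_eq _).mpr (finRotate_mk hk).symm

lemma finRotate_symm_zero {n : ℕ} (hn : 0 < n) :
    (finRotate n).symm ⟨0, hn⟩ = ⟨n - 1, by omega⟩ := by
  apply (Equiv.symm_apply_eq _).mpr
  cases n with
  | zero => omega
  | succ m =>
    rw [finRotate_succ_apply]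
    have : (⟨m+1-1, by omega⟩ : Fin (m+1)) = Fin.last m := by
      apply Fin.ext; simp [Fin.last]
    rw [this, Fin.last_add_one]
    rfl

lemma rot_symm_val {n : ℕ} (k : Fin n) (hk : 1 ≤ (k : ℕ)) :
    (((finRotate n).symm k : Fin n) : ℕ) = (k : ℕ) - 1 := by
  have hk2 : ((k : ℕ) - 1) + 1 < n := by omega
  have : k = ⟨((k : ℕ) - 1) + 1, hk2⟩ := by apply Fin.ext; simp; omega
  rw [this, finRotate_symm_mk]
  simp

lemma rot_symm_val_zero {n : ℕ} (k : Fin n) (hk : (k : ℕ) = 0) :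
    (((finRotate n).symm k : Fin n) : ℕ) = n - 1 := by
  have h0 : (0:ℕ) < n := lt_of_le_of_lt (Nat.zero_le _) k.isLt
  have : k = ⟨0, h0⟩ := Fin.ext hk
  rw [this, finRotate_symm_zero]

variable {L} in
lemma card_pos' (h : Nonempty P) : 0 < Fintype.card P := Fintype.card_pos

lemma promote_apply (h : Nonempty P) (x : P) :
    promote L x = (finRotate (Fintype.card P)).symm
      (L ((promChainFrom L (L.symm ⟨0, Fintype.card_pos⟩)).formPerm x)) := by
  unfold promote
  rw [dif_pos h]
  rfl

lemma promote_symm_apply (h : Nonempty P) (j : Fin (Fintype.card P)) :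
    (promote L).symm j = (promChainFrom L (L.symm ⟨0, Fintype.card_pos⟩)).formPerm.symm
      (L.symm (finRotate (Fintype.card P) j)) := by
  unfold promote
  rw [dif_pos h]
  rfl

lemma promote_symm_step (j : ℕ) (h1 : 1 ≤ j) (h2 : j < Fintype.card P) :
    (promote L).symm ⟨j-1, by omega⟩ = L.symm ⟨j, h2⟩ ∨
    ((promote L).symm ⟨j-1, by omega⟩ < L.symm ⟨j, h2⟩ ∧
      ((promote L).symm ⟨j-1, by omega⟩ = L.symm ⟨0, by omega⟩ ∨
        ∃ p, p < (promote L).symm ⟨j-1, by omega⟩) ∧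
      ∀ q, (promote L).symm ⟨j-1, by omega⟩ < q → j ≤ (L q : ℕ)) := by
  have h : Nonempty P := Fintype.card_pos_iff.mp (by omega)
  rw [promote_symm_apply L h]
  have hrot : finRotate (Fintype.card P) ⟨j-1, by omega⟩ = ⟨j, h2⟩ := by
    have hj : (j-1) + 1 < Fintype.card P := by omega
    have := finRotate_mk hj
    have he1 : (⟨j-1, by omega⟩ : Fin (Fintype.card P)) = ⟨j-1, by omega⟩ := rfl
    rw [show (⟨j, h2⟩ : Fin (Fintype.card P)) = ⟨(j-1)+1, hj⟩ from by apply Fin.ext; simp; omega]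
    exact this
  rw [hrot]
  have hy : L.symm ⟨j, h2⟩ ≠ L.symm ⟨0, Fintype.card_pos⟩ := by
    intro hcontra
    have := L.symm.injective hcontra
    simp only [Fin.mk.injEq] at this
    omega
  rcases formPerm_symm_promChainFrom L (L.symm ⟨0, Fintype.card_pos⟩) (L.symm ⟨j, h2⟩) hy with
    he | ⟨hlt, hcase, hmin⟩
  · left; exact he
  · right
    refine ⟨hlt, hcase, ?_⟩
    intro q hq
    have := hmin q hq
    rw [Equiv.apply_symm_apply] at this
    exact Fin.le_def.mp this

lemma promote_val_cases (h : Nonempty P) (y : P) :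
    ((promote L y : ℕ) = Fintype.card P - 1 ∧ ∀ q, ¬ y < q) ∨
    (∃ q', (q' = y ∨ (y < q' ∧ ∀ s, y < s → (L q' : ℕ) ≤ (L s : ℕ))) ∧
      1 ≤ (L q' : ℕ) ∧ (promote L y : ℕ) = (L q' : ℕ) - 1) := by
  set v := L.symm ⟨0, Fintype.card_pos⟩ with hv
  set c := promChainFrom L v with hc
  have hlab0 : ∀ q : P, q ≠ v → 1 ≤ (L q : ℕ) := by
    intro q hq
    by_contra hcon
    apply hq
    have : (L q : ℕ) = 0 := by omega
    have h2 : L q = ⟨0, Fintype.card_pos⟩ := Fin.ext this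
    rw [hv, ← h2, Equiv.symm_apply_apply]
  by_cases hyc : y ∈ c
  · by_cases hylast : y = c.getLast (promChainFrom_ne_nil L v)
    · left
      constructor
      · rw [promote_apply L h]
        have : c.formPerm y = v := by rw [hylast]; exact formPerm_getLast_promChainFrom L v
        rw [← hc, this, hv, Equiv.apply_symm_apply]
        exact rot_symm_val_zero _ rfl
      · intro q
        rw [hylast]
        exact getLast_maximal L v q
    · obtain ⟨h1, h2, h3⟩ := formPerm_promChainFrom L hyc hylast
      right
      refine ⟨c.formPerm y, Or.inr ⟨h1, fun s hs => Fin.le_def.mp (h3 s hs)⟩, ?_, ?_⟩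
      · apply hlab0
        intro hcontra
        have hvy : v ≤ y := head_le_of_mem_promChainFrom L hyc
        rw [hcontra] at h1
        exact absurd (lt_of_le_of_lt hvy h1) (lt_irrefl v)
      · rw [promote_apply L h, ← hc]
        apply rot_symm_val
        apply hlab0
        intro hcontra
        have hvy : v ≤ y := head_le_of_mem_promChainFrom L hyc
        rw [hcontra] at h1
        exact absurd (lt_of_le_of_lt hvy h1) (lt_irrefl v)
  · right
    refine ⟨y, Or.inl rfl, ?_, ?_⟩
    · apply hlab0
      intro hcontra
      apply hyc
      rw [hcontra, hc]
      have := List.head_mem (promChainFrom_ne_nil L v)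
      rwa [head_promChainFrom] at this
    · rw [promote_apply L h, ← hc, List.formPerm_apply_of_notMem hyc]
      apply rot_symm_val
      apply hlab0
      intro hcontra
      apply hyc
      rw [hcontra, hc]
      have := List.head_mem (promChainFrom_ne_nil L v)
      rwa [head_promChainFrom] at this

lemma frozen_step (h : Nonempty P) (t : ℕ)
    (hL : ∀ j, Fintype.card P - t ≤ j → IsUpperSet {x : P | j ≤ (L x : ℕ)}) :
    ∀ j, Fintype.card P - (t+1) ≤ j → IsUpperSet {x : P | j ≤ ((promote L) x : ℕ)} := by
  intro j hj x y hxy hx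
  simp only [Set.mem_setOf_eq] at hx ⊢
  rcases eq_or_lt_of_le hxy with rfl | hlt
  · exact hx
  have hjn : j ≤ Fintype.card P - 1 := by
    have := (promote L x).isLt
    omega
  have key : ∀ q, x < q → j + 1 ≤ (L q : ℕ) := by
    rcases promote_val_cases L h x with ⟨hval, hmax⟩ | ⟨q', hq', hq'1, hval⟩
    · intro q hq; exact absurd hq (hmax q)
    · have hq'j : j + 1 ≤ (L q' : ℕ) := by omega
      rcases hq' with rfl | ⟨hlt', hmin⟩
      · intro q hq
        exact hL (j+1) (by omega) (le_of_lt hq) hq'j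
      · intro q hq
        exact le_trans hq'j (hmin q hq)
  rcases promote_val_cases L h y with ⟨hval, _⟩ | ⟨q', hq', hq'1, hval⟩
  · omega
  · rcases hq' with heq | ⟨hlt', hmin⟩
    · rw [heq] at hval hq'1
      have := key y hlt
      omega
    · have := key q' (lt_trans hlt hlt')
      omega

lemma frozen_iter (h : Nonempty P) (t : ℕ) :
    ∀ j, Fintype.card P - t ≤ j → IsUpperSet {x : P | j ≤ ((promote^[t] L) x : ℕ)} := by
  induction t with
  | zero =>
    intro j hj a b hab ha
    simp only [Set.mem_setOf_eq, Function.iterate_zero_apply] at ha ⊢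
    have := (L a).isLt
    omega
  | succ s ih =>
    intro j hj
    rw [Function.iterate_succ_apply']
    exact frozen_step (promote^[s] L) h s ih j hj

lemma not_linear_iff (M : Labeling P) (hn : 2 ≤ Fintype.card P)
    (hfro : ∀ j, 2 ≤ j → IsUpperSet {x : P | j ≤ (M x : ℕ)}) :
    ¬ IsLinearExt M ↔ M.symm ⟨1, by omega⟩ < M.symm ⟨0, by omega⟩ := by
  constructor
  · intro hnl
    simp only [IsLinearExt, not_forall] at hnl
    obtain ⟨x, y, hxy, hMxy⟩ := hnl
    have hlt : (M y : ℕ) < (M x : ℕ) := by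
      rcases Nat.lt_or_ge (M y : ℕ) (M x : ℕ) with h | h
      · exact h
      · exact absurd (Fin.le_def.mpr h) hMxy
    have hx1 : (M x : ℕ) ≤ 1 := by
      by_contra hcon
      have := hfro (M x : ℕ) (by omega) hxy (by simp)
      simp only [Set.mem_setOf_eq] at this
      omega
    have hMx : M x = ⟨1, by omega⟩ := Fin.ext (by simp; omega)
    have hMy : M y = ⟨0, by omega⟩ := Fin.ext (by simp; omega)
    have hxe : x = M.symm ⟨1, by omega⟩ := by rw [← hMx, Equiv.symm_apply_apply]
    have hye : y = M.symm ⟨0, by omega⟩ := by rw [← hMy, Equiv.symm_apply_apply]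
    rw [← hxe, ← hye]
    refine lt_of_le_of_ne hxy ?_
    intro hcontra
    rw [hcontra] at hMx
    rw [hMx] at hMy
    simp at hMy
  · intro hlt hlin
    have := hlin _ _ (le_of_lt hlt)
    rw [Equiv.apply_symm_apply, Equiv.apply_symm_apply] at this
    rw [Fin.le_def] at this
    simp at this

lemma reachable_of_le {a b : P} (hab : a ≤ b) : (compGraph P).Reachable a b := by
  rcases eq_or_ne a b with rfl | hne
  · exact SimpleGraph.Reachable.refl a
  · exact SimpleGraph.Adj.reachable ⟨hne, Or.inl hab⟩

lemma transport (j t : ℕ) (ht : t ≤ j) (hj : j < Fintype.card P) :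
    (compGraph P).Reachable ((promote^[t] L).symm ⟨j - t, by omega⟩) (L.symm ⟨j, hj⟩) := by
  induction t with
  | zero =>
    have : ((promote^[0] L).symm ⟨j - 0, by omega⟩) = L.symm ⟨j, hj⟩ := by
      rw [Function.iterate_zero_apply]
      congr 1
    rw [this]
  | succ s ih =>
    have hs : s ≤ j := by omega
    have hidx : (⟨j - (s+1), by omega⟩ : Fin (Fintype.card P)) = ⟨(j - s) - 1, by omega⟩ :=
      Fin.ext (by simp; omega)
    have hgoal : (promote^[s+1] L).symm ⟨j - (s+1), by omega⟩ =
        (promote (promote^[s] L)).symm ⟨(j-s) - 1, by omega⟩ := by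
      rw [Function.iterate_succ_apply', hidx]
    rw [hgoal]
    rcases promote_symm_step (promote^[s] L) (j - s) (by omega) (by omega) with
      he | ⟨hlt, _, _⟩
    · rw [he]; exact ih hs
    · exact (reachable_of_le (le_of_lt hlt)).trans (ih hs)

def CompMin (m : P) : Prop := ∀ q, (compGraph P).Reachable m q → m ≤ q

variable {L} in
lemma symm_idx_congr (M : Labeling P) {a b : ℕ} (h : a = b) (ha : a < Fintype.card P)
    (hb : b < Fintype.card P) : M.symm ⟨a, ha⟩ = M.symm ⟨b, hb⟩ := by subst h; rfl

variable {L} in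
lemma compMin_of_no_lt
    (hmin : ∀ c : (compGraph P).ConnectedComponent, ∃ m ∈ c.supp, ∀ y ∈ c.supp, m ≤ y)
    {w : P} (hw : ∀ y, ¬ y < w) : CompMin w := by
  obtain ⟨m', hm'supp, hm'min⟩ := hmin ((compGraph P).connectedComponentMk w)
  have hm'w : m' ≤ w := hm'min w (by rw [SimpleGraph.ConnectedComponent.mem_supp_iff])
  have heq : m' = w := by
    rcases eq_or_lt_of_le hm'w with h | h
    · exact h
    · exact absurd h (hw m')
  intro q hq
  rw [← heq]
  apply hm'min
  rw [SimpleGraph.ConnectedComponent.mem_supp_iff]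
  exact (SimpleGraph.ConnectedComponent.sound hq).symm

variable {L} in
lemma no_lt_of_compMin {w : P} (hw : CompMin w) : ∀ y, ¬ y < w := by
  intro y hy
  have : w ≤ y := hw y ((reachable_of_le (le_of_lt hy)).symm)
  exact absurd (lt_of_lt_of_le hy this) (lt_irrefl y)

theorem isTangled_iff (hn : 2 ≤ Fintype.card P)
    (hmin : ∀ c : (compGraph P).ConnectedComponent, ∃ m ∈ c.supp, ∀ y ∈ c.supp, m ≤ y)
    (L : Labeling P) :
    IsTangled L ↔ (CompMin (L.symm ⟨Fintype.card P - 1, by omega⟩) ∧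
      (compGraph P).Reachable (L.symm ⟨Fintype.card P - 1, by omega⟩)
        (L.symm ⟨Fintype.card P - 2, by omega⟩)) := by
  have hne : Nonempty P := Fintype.card_pos_iff.mp (by omega)
  have hfro : ∀ j, 2 ≤ j →
      IsUpperSet {x : P | j ≤ ((promote^[Fintype.card P - 2] L) x : ℕ)} := by
    intro j hj
    exact frozen_iter L hne (Fintype.card P - 2) j (by omega)
  constructor
  · rintro ⟨-, hnl⟩
    have hwu := (not_linear_iff (promote^[Fintype.card P - 2] L) hn hfro).mp hnl
    set M := promote^[Fintype.card P - 2] L with hM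
    set w := M.symm ⟨1, by omega⟩ with hw
    set u := M.symm ⟨0, by omega⟩ with hu
    have hbelow : ∀ y, ¬ y < w := by
      intro y hy
      rcases Nat.lt_or_ge (M y : ℕ) 2 with h2 | h2
      · rcases Nat.lt_or_ge (M y : ℕ) 1 with h1 | h1
        · have : y = u := by
            have hMy : M y = ⟨0, by omega⟩ := Fin.ext (by simpa using h1)
            rw [hu, ← hMy, Equiv.symm_apply_apply]
          rw [this] at hy
          exact absurd (lt_trans hy hwu) (lt_irrefl u)
        · have : y = w := by
            have hMy : M y = ⟨1, by omega⟩ := Fin.ext (by simp; omega)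
            rw [hw, ← hMy, Equiv.symm_apply_apply]
          rw [this] at hy
          exact absurd hy (lt_irrefl w)
      · have hmem : y ∈ {x : P | (M y : ℕ) ≤ (M x : ℕ)} := by simp
        have := hfro (M y : ℕ) h2 (le_of_lt hy) hmem
        simp only [Set.mem_setOf_eq] at this
        have hw1 : (M w : ℕ) = 1 := by rw [hw, Equiv.apply_symm_apply]
        omega
    have hcmw : CompMin w := compMin_of_no_lt hmin hbelow
    -- Backward induction step, abstracted
    have step : ∀ t, t + 3 ≤ Fintype.card P →
        (promote^[t+1] L).symm ⟨Fintype.card P - 1 - (t+1), by omega⟩ = w →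
        (promote^[t] L).symm ⟨Fintype.card P - 1 - t, by omega⟩ = w := by
      intro t ht2 hihr
      have hcard3 : 3 ≤ Fintype.card P := by omega
      have hstep := promote_symm_step (promote^[t] L) (Fintype.card P - 1 - t)
        (by omega) (by omega)
      have hone : (promote^[t+1] L).symm
          ⟨Fintype.card P - 1 - (t+1), by omega⟩ =
          (promote (promote^[t] L)).symm ⟨(Fintype.card P - 1 - t) - 1, by omega⟩ := by
        rw [Function.iterate_succ_apply']
        apply symm_idx_congr
        omega
      rw [hone] at hihr
      rcases hstep with he | ⟨hlt, hcase, hminq⟩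
      · rw [hihr] at he
        exact he.symm
      · exfalso
        rw [hihr] at hlt hcase hminq
        have hMt_w : w = (promote^[t] L).symm ⟨0, by omega⟩ := by
          rcases hcase with h | ⟨p, hp⟩
          · exact h
          · exact absurd hp (hbelow p)
        have hadd : promote^[Fintype.card P - 2 - t] (promote^[t] L) =
            promote^[Fintype.card P - 2] L := by
          rw [← Function.iterate_add_apply]
          congr 1
          omega
        have htrans := transport (promote^[t] L) (Fintype.card P - 2 - t)
          (Fintype.card P - 2 - t) (le_refl _) (by omega)
        rw [hadd] at htrans
        have hu0 : (promote^[Fintype.card P - 2] L).symm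
            ⟨Fintype.card P - 2 - t - (Fintype.card P - 2 - t), by omega⟩ = u := by
          rw [hu, hM]
          apply symm_idx_congr
          omega
        rw [hu0] at htrans
        set u' := (promote^[t] L).symm ⟨Fintype.card P - 2 - t, by omega⟩ with hu'
        have hwu' : (compGraph P).Reachable w u' :=
          ((reachable_of_le (le_of_lt hwu)).trans htrans)
        have hne_u' : u' ≠ w := by
          rw [hu', hMt_w]
          intro hcontra
          have := (promote^[t] L).symm.injective hcontra
          simp only [Fin.mk.injEq] at this
          omega
        have hwltu' : w < u' := lt_of_le_of_ne (hcmw u' hwu') (Ne.symm hne_u')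
        have := hminq u' hwltu'
        have hval : ((promote^[t] L) u' : ℕ) = Fintype.card P - 2 - t := by
          rw [hu', Equiv.apply_symm_apply]
        omega
    have claim : ∀ s, s ≤ Fintype.card P - 2 →
        (promote^[Fintype.card P - 2 - s] L).symm
          ⟨Fintype.card P - 1 - (Fintype.card P - 2 - s), by omega⟩ = w := by
      intro s
      induction s with
      | zero =>
        intro _
        rw [hw, hM]
        apply symm_idx_congr
        omega
      | succ r ih =>
        intro hr
        have hihr := ih (by omega)
        have hfun : promote^[Fintype.card P - 2 - r] L =
            promote^[(Fintype.card P - 2 - (r+1)) + 1] L := by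
          congr 1
          omega
        have hihr' : (promote^[(Fintype.card P - 2 - (r+1)) + 1] L).symm
            ⟨Fintype.card P - 1 - ((Fintype.card P - 2 - (r+1)) + 1), by omega⟩ = w := by
          rw [← hfun, ← hihr]
          apply symm_idx_congr
          omega
        exact step (Fintype.card P - 2 - (r+1)) (by omega) hihr'
    have hzero := claim (Fintype.card P - 2) (le_refl _)
    have hL0 : L.symm ⟨Fintype.card P - 1, by omega⟩ = w := by
      have h0 : Fintype.card P - 2 - (Fintype.card P - 2) = 0 := by omega
      rw [← hzero]
      rw [show promote^[Fintype.card P - 2 - (Fintype.card P - 2)] L = L by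
        rw [h0, Function.iterate_zero_apply]]
      apply symm_idx_congr
      omega
    constructor
    · rw [hL0]; exact hcmw
    · rw [hL0]
      have htrans := transport L (Fintype.card P - 2) (Fintype.card P - 2) (le_refl _)
        (by omega)
      have hu0 : (promote^[Fintype.card P - 2] L).symm
          ⟨Fintype.card P - 2 - (Fintype.card P - 2), by omega⟩ = u := by
        rw [hu, hM]
        apply symm_idx_congr
        omega
      rw [hu0] at htrans
      exact (reachable_of_le (le_of_lt hwu)).trans htrans
  · rintro ⟨hcm, hreach⟩
    refine ⟨hn, ?_⟩
    set m := L.symm ⟨Fintype.card P - 1, by omega⟩ with hm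
    have hbelow : ∀ y, ¬ y < m := no_lt_of_compMin hcm
    have claim : ∀ t, t ≤ Fintype.card P - 2 →
        (promote^[t] L).symm ⟨Fintype.card P - 1 - t, by omega⟩ = m := by
      intro t
      induction t with
      | zero =>
        intro _
        rw [hm, Function.iterate_zero_apply]
        apply symm_idx_congr
        omega
      | succ s ih =>
        intro hs
        have hih := ih (by omega)
        rcases promote_symm_step (promote^[s] L) (Fintype.card P - 1 - s)
          (by omega) (by omega) with he | ⟨hlt, _, _⟩
        · rw [hih] at he
          rw [Function.iterate_succ_apply']
          rw [← he]
          apply symm_idx_congr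
          omega
        · exfalso
          rw [hih] at hlt
          exact hbelow _ hlt
    have hw1 : (promote^[Fintype.card P - 2] L).symm ⟨1, by omega⟩ = m := by
      have := claim (Fintype.card P - 2) (le_refl _)
      rw [← this]
      apply symm_idx_congr
      omega
    have htrans := transport L (Fintype.card P - 2) (Fintype.card P - 2) (le_refl _)
      (by omega)
    -- htrans : Reachable ((promote^[N-2]L).symm ⟨N-2-(N-2)⟩) (L.symm ⟨N-2⟩)
    set u := (promote^[Fintype.card P - 2] L).symm ⟨0, by omega⟩ with hu
    have hu0 : (promote^[Fintype.card P - 2] L).symm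
        ⟨Fintype.card P - 2 - (Fintype.card P - 2), by omega⟩ = u := by
      rw [hu]
      apply symm_idx_congr
      omega
    rw [hu0] at htrans
    have hmu : (compGraph P).Reachable m u := hreach.trans htrans.symm
    have hle : m ≤ u := hcm u hmu
    have hne_mu : m ≠ u := by
      rw [hw1.symm, hu]
      intro hcontra
      have := (promote^[Fintype.card P - 2] L).symm.injective hcontra
      simp only [Fin.mk.injEq] at this
      omega
    intro hlin
    have := hlin m u hle
    have h1 : (promote^[Fintype.card P - 2] L) m = ⟨1, by omega⟩ := by
      rw [← hw1, Equiv.apply_symm_apply]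
    have h0 : (promote^[Fintype.card P - 2] L) u = ⟨0, by omega⟩ := by
      rw [hu, Equiv.apply_symm_apply]
    rw [h1, h0] at this
    rw [Fin.le_def] at this
    simp at this

def pinEquiv {γ δ : Type*} [DecidableEq γ] [DecidableEq δ] (c : γ) (d : δ) :
    {f : γ ≃ δ // f c = d} ≃ ({y : γ // y ≠ c} ≃ {j : δ // j ≠ d}) where
  toFun f := Equiv.subtypeEquiv f.1 (fun y => by
    constructor
    · intro hy hfy
      exact hy (f.1.injective (hfy.trans f.2.symm))
    · intro hfy hy
      subst hy
      exact hfy f.2)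
  invFun g :=
    ⟨{ toFun := fun y => if h : y = c then d else (g ⟨y, h⟩).1
       invFun := fun j => if h : j = d then c else (g.symm ⟨j, h⟩).1
       left_inv := by
         intro y
         by_cases h : y = c
         · simp [h]
         · dsimp only
           rw [dif_neg h, dif_neg (g ⟨y, h⟩).2]
           rw [show (⟨(g ⟨y, h⟩).1, (g ⟨y, h⟩).2⟩ : {j // j ≠ d}) = g ⟨y, h⟩ from rfl]
           rw [Equiv.symm_apply_apply]
       right_inv := by
         intro j
         by_cases h : j = d
         · simp [h]
         · dsimp only
           rw [dif_neg h, dif_neg (g.symm ⟨j, h⟩).2]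
           rw [show (⟨(g.symm ⟨j, h⟩).1, (g.symm ⟨j, h⟩).2⟩ : {y // y ≠ c}) = g.symm ⟨j, h⟩
             from rfl]
           rw [Equiv.apply_symm_apply] },
     by simp⟩
  left_inv := by
    intro f
    apply Subtype.ext
    apply Equiv.ext
    intro y
    simp only [Equiv.coe_fn_mk]
    by_cases h : y = c
    · subst h
      rw [dif_pos rfl, f.2]
    · rw [dif_neg h]
      rfl
  right_inv := by
    intro g
    apply Equiv.ext
    intro y
    apply Subtype.ext
    simp only [Equiv.subtypeEquiv_apply, Equiv.coe_fn_mk]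
    exact dif_neg y.2

lemma card_pin_two {γ δ : Type*} [Fintype γ] [Fintype δ] [DecidableEq γ] [DecidableEq δ]
    (h : Fintype.card γ = Fintype.card δ)
    (c c' : γ) (hcc : c' ≠ c) (d d' : δ) (hdd : d' ≠ d) :
    Nat.card {f : γ ≃ δ // f c = d ∧ f c' = d'} = Nat.factorial (Fintype.card γ - 2) := by
  classical
  have E1 : {f : γ ≃ δ // f c = d ∧ f c' = d'} ≃
      {g : {f : γ ≃ δ // f c = d} // g.1 c' = d'} :=
    (Equiv.subtypeSubtypeEquivSubtypeInter (fun f : γ ≃ δ => f c = d)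
      (fun f : γ ≃ δ => f c' = d')).symm
  have E2 : {g : {f : γ ≃ δ // f c = d} // g.1 c' = d'} ≃
      {g' : ({y : γ // y ≠ c} ≃ {j : δ // j ≠ d}) // g' ⟨c', hcc⟩ = ⟨d', hdd⟩} := by
    refine Equiv.subtypeEquiv (pinEquiv c d) (fun f => ?_)
    rw [Subtype.ext_iff]
    constructor
    · intro hfc
      exact hfc
    · intro hfc
      exact hfc
  have E3 : {g' : ({y : γ // y ≠ c} ≃ {j : δ // j ≠ d}) // g' ⟨c', hcc⟩ = ⟨d', hdd⟩} ≃
      ({y : {y : γ // y ≠ c} // y ≠ ⟨c', hcc⟩} ≃ {j : {j : δ // j ≠ d} // j ≠ ⟨d', hdd⟩}) :=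
    pinEquiv _ _
  have hc1 : Fintype.card {y : γ // y ≠ c} = Fintype.card γ - 1 := by
    have := Fintype.card_subtype_compl (fun y : γ => y = c)
    rw [Fintype.card_subtype_eq] at this
    exact this
  have hd1 : Fintype.card {j : δ // j ≠ d} = Fintype.card δ - 1 := by
    have := Fintype.card_subtype_compl (fun j : δ => j = d)
    rw [Fintype.card_subtype_eq] at this
    exact this
  have hc2 : Fintype.card {y : {y : γ // y ≠ c} // y ≠ ⟨c', hcc⟩} = Fintype.card γ - 2 := by
    have := Fintype.card_subtype_compl (fun y : {y : γ // y ≠ c} => y = ⟨c', hcc⟩)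
    rw [Fintype.card_subtype_eq] at this
    rw [hc1] at this
    rw [this]
    omega
  have hd2 : Fintype.card {j : {j : δ // j ≠ d} // j ≠ ⟨d', hdd⟩} = Fintype.card δ - 2 := by
    have := Fintype.card_subtype_compl (fun j : {j : δ // j ≠ d} => j = ⟨d', hdd⟩)
    rw [Fintype.card_subtype_eq] at this
    rw [hd1] at this
    rw [this]
    omega
  have E := (E1.trans E2).trans E3
  rw [Nat.card_congr E, Nat.card_eq_fintype_card,
    Fintype.card_equiv (Fintype.equivOfCardEq (by rw [hc2, hd2, h])), hc2]

section MinOf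

variable (hmin : ∀ c : (compGraph P).ConnectedComponent, ∃ m ∈ c.supp, ∀ y ∈ c.supp, m ≤ y)

def minOf (z : P) : P := (hmin ((compGraph P).connectedComponentMk z)).choose

lemma minOf_mem (z : P) : (compGraph P).connectedComponentMk (minOf hmin z) =
    (compGraph P).connectedComponentMk z := by
  have := (hmin ((compGraph P).connectedComponentMk z)).choose_spec.1
  rwa [SimpleGraph.ConnectedComponent.mem_supp_iff] at this

lemma minOf_reachable (z : P) : (compGraph P).Reachable (minOf hmin z) z :=
  (SimpleGraph.ConnectedComponent.eq).mp (minOf_mem hmin z)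

lemma minOf_compMin (z : P) : CompMin (minOf hmin z) := by
  intro q hq
  apply (hmin ((compGraph P).connectedComponentMk z)).choose_spec.2
  rw [SimpleGraph.ConnectedComponent.mem_supp_iff]
  rw [← SimpleGraph.ConnectedComponent.sound hq]
  exact minOf_mem hmin z

lemma compMin_unique {a b : P} (ha : CompMin a) (hb : CompMin b)
    (h : (compGraph P).Reachable a b) : a = b :=
  le_antisymm (ha b h) (hb a h.symm)

variable {L} in
def minEquiv : {z : P // CompMin z} ≃ (compGraph P).ConnectedComponent where
  toFun z := (compGraph P).connectedComponentMk z.1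
  invFun c := ⟨(hmin c).choose, by
    intro q hq
    apply (hmin c).choose_spec.2
    rw [SimpleGraph.ConnectedComponent.mem_supp_iff, ← SimpleGraph.ConnectedComponent.sound hq,
      ← SimpleGraph.ConnectedComponent.mem_supp_iff]
    exact (hmin c).choose_spec.1⟩
  left_inv := by
    intro ⟨z, hz⟩
    apply Subtype.ext
    simp only
    have hreach : (compGraph P).Reachable
        ((hmin ((compGraph P).connectedComponentMk z)).choose) z := by
      have := (hmin ((compGraph P).connectedComponentMk z)).choose_spec.1
      rw [SimpleGraph.ConnectedComponent.mem_supp_iff] at this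
      exact (SimpleGraph.ConnectedComponent.eq).mp this
    have hcm : CompMin ((hmin ((compGraph P).connectedComponentMk z)).choose) := by
      intro q hq
      apply (hmin ((compGraph P).connectedComponentMk z)).choose_spec.2
      rw [SimpleGraph.ConnectedComponent.mem_supp_iff, ← SimpleGraph.ConnectedComponent.sound hq]
      have := (hmin ((compGraph P).connectedComponentMk z)).choose_spec.1
      rwa [SimpleGraph.ConnectedComponent.mem_supp_iff] at this
    exact compMin_unique hcm hz hreach
  right_inv := by
    intro c
    simp only
    have := (hmin c).choose_spec.1
    rwa [SimpleGraph.ConnectedComponent.mem_supp_iff] at this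

end MinOf

end Tangled

open Tangled

/-- If `P` has `n ≥ 2` elements and each of its `r` connected
components has a unique minimal element, then the number of tangled labelings of
`P` is `(n − r) · (n − 2)!`. -/
theorem card_tangled_unique_minimal (hn : 2 ≤ Fintype.card P)
    (hmin : ∀ c : (compGraph P).ConnectedComponent,
      ∃ m ∈ c.supp, ∀ y ∈ c.supp, m ≤ y) :
    Nat.card {L : Labeling P // IsTangled L} =
      (Fintype.card P - Nat.card (compGraph P).ConnectedComponent) *
        Nat.factorial (Fintype.card P - 2) := by
  classical
  have hN1 : Fintype.card P - 1 < Fintype.card P := by omega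
  have hN2 : Fintype.card P - 2 < Fintype.card P := by omega
  have hiff : ∀ L : Labeling P, IsTangled L ↔
      (¬ CompMin (L.symm ⟨Fintype.card P - 2, hN2⟩) ∧
        L (minOf hmin (L.symm ⟨Fintype.card P - 2, hN2⟩)) = ⟨Fintype.card P - 1, hN1⟩) := by
    intro L
    rw [isTangled_iff hn hmin L]
    constructor
    · rintro ⟨hcm, hreach⟩
      constructor
      · intro hcmz
        have h1 := hcm _ hreach
        have h2 := hcmz _ hreach.symm
        have h3 := le_antisymm h1 h2
        have := L.symm.injective h3
        simp only [Fin.mk.injEq] at this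
        omega
      · have hu := compMin_unique (minOf_compMin hmin _) hcm
          ((minOf_reachable hmin _).trans hreach.symm)
        rw [hu, Equiv.apply_symm_apply]
    · rintro ⟨hncm, heq⟩
      have hm' : L.symm ⟨Fintype.card P - 1, hN1⟩ =
          minOf hmin (L.symm ⟨Fintype.card P - 2, hN2⟩) := by
        rw [← heq, Equiv.symm_apply_apply]
      constructor
      · rw [hm']
        exact minOf_compMin hmin _
      · rw [hm']
        exact minOf_reachable hmin _
  have e : {L : Labeling P // IsTangled L} ≃
      Σ z : {z : P // ¬ CompMin z},
        {L : Labeling P // L (minOf hmin z.1) = ⟨Fintype.card P - 1, hN1⟩ ∧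
          L z.1 = ⟨Fintype.card P - 2, hN2⟩} := by
    refine (Equiv.subtypeEquivRight hiff).trans ?_
    exact {
      toFun := fun L => ⟨⟨L.1.symm ⟨Fintype.card P - 2, hN2⟩, L.2.1⟩,
        ⟨L.1, L.2.2, by rw [Equiv.apply_symm_apply]⟩⟩
      invFun := fun x => ⟨x.2.1, by
        have hz : x.2.1.symm ⟨Fintype.card P - 2, hN2⟩ = x.1.1 := by
          rw [Equiv.symm_apply_eq]
          exact x.2.2.2.symm
        rw [hz]
        exact ⟨x.1.2, x.2.2.1⟩⟩
      left_inv := fun L => Subtype.ext rfl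
      right_inv := fun x => by
        obtain ⟨⟨z, hz⟩, ⟨L, hL1, hL2⟩⟩ := x
        have hzz : L.symm ⟨Fintype.card P - 2, hN2⟩ = z := by
          rw [Equiv.symm_apply_eq]
          exact hL2.symm
        simp only
        subst hzz
        rfl }
  rw [Nat.card_congr e, Nat.card_eq_fintype_card, Fintype.card_sigma]
  have hterm : ∀ z : {z : P // ¬ CompMin z},
      Fintype.card {L : Labeling P // L (minOf hmin z.1) = ⟨Fintype.card P - 1, hN1⟩ ∧
        L z.1 = ⟨Fintype.card P - 2, hN2⟩} = Nat.factorial (Fintype.card P - 2) := by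
    intro z
    rw [← Nat.card_eq_fintype_card]
    have hcc : z.1 ≠ minOf hmin z.1 := by
      intro h
      apply z.2
      rw [h]
      exact minOf_compMin hmin _
    have hdd : (⟨Fintype.card P - 2, hN2⟩ : Fin (Fintype.card P)) ≠
        ⟨Fintype.card P - 1, hN1⟩ := by
      intro h
      simp only [Fin.mk.injEq] at h
      omega
    exact card_pin_two (by simp) (minOf hmin z.1) z.1 hcc _ _ hdd
  rw [Finset.sum_congr rfl (fun z _ => hterm z), Finset.sum_const, smul_eq_mul]
  congr 1
  rw [Finset.card_univ, Fintype.card_subtype_compl]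
  congr 1
  rw [← Nat.card_eq_fintype_card]
  exact Nat.card_congr (minEquiv hmin)

end
end

section
/- If L is a tangled labeling of an n-element poset P, then L⁻¹(n) is a minimal element of P. -/
open scoped Classical

noncomputable section

variable {P : Type*} [Fintype P] [PartialOrder P]

lemma promChainFrom_head (L : Labeling P) (v : P) :
    ∃ t, promChainFrom L v = v :: t := by
  rw [promChainFrom]
  split <;> exact ⟨_, rfl⟩

lemma promChainFrom_ne_nil (L : Labeling P) (v : P) : promChainFrom L v ≠ [] := by
  obtain ⟨t, ht⟩ := promChainFrom_head L v
  simp [ht]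

lemma lSucc_label_le (L : Labeling P) (v : P)
    (h : (Finset.univ.filter fun y => v < y).Nonempty) {z : P} (hz : v < z) :
    L (lSucc L v h) ≤ L z := by
  have hmem : L z ∈ (Finset.univ.filter fun y => v < y).image L :=
    Finset.mem_image_of_mem L (by simp [hz])
  have hle := Finset.min'_le _ _ hmem
  unfold lSucc
  rwa [Equiv.apply_symm_apply]

lemma promChainFrom_consec (L : Labeling P) (v : P) :
    ∀ i (hi : i + 1 < (promChainFrom L v).length),
      (promChainFrom L v)[i] < (promChainFrom L v)[i + 1] ∧
        ∀ z, (promChainFrom L v)[i] < z → L ((promChainFrom L v)[i + 1]) ≤ L z := by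
  induction v using promChainFrom.induct (L := L) with
  | case1 v h IH =>
    have hC : promChainFrom L v = v :: promChainFrom L (lSucc L v h) := by
      rw [promChainFrom]; rw [dif_pos h]
    intro i hi
    simp only [hC] at hi ⊢
    match i with
    | 0 =>
      obtain ⟨t, ht⟩ := promChainFrom_head L (lSucc L v h)
      have h0 : (promChainFrom L (lSucc L v h))[0]'(by simp [ht]) = lSucc L v h := by
        simp [ht]
      simp only [List.getElem_cons_zero, List.getElem_cons_succ, h0]
      exact ⟨lt_lSucc L v h, fun z hz => lSucc_label_le L v h hz⟩
    | (i + 1) =>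
      simp only [List.getElem_cons_succ]
      exact IH i (by simpa using hi)
  | case2 v h =>
    have hC : promChainFrom L v = [v] := by
      rw [promChainFrom]; rw [dif_neg h]
    intro i hi
    rw [hC] at hi
    simp at hi

lemma promChainFrom_chain' (L : Labeling P) (v : P) :
    List.Chain' (· < ·) (promChainFrom L v) := by
  refine List.isChain_iff_getElem.mpr ?_
  intro i hi
  exact (promChainFrom_consec L v i (by omega)).1

lemma promChainFrom_pairwise (L : Labeling P) (v : P) :
    List.Pairwise (· < ·) (promChainFrom L v) :=
  List.isChain_iff_pairwise.mp (promChainFrom_chain' L v)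

lemma promChainFrom_nodup (L : Labeling P) (v : P) :
    (promChainFrom L v).Nodup :=
  (promChainFrom_pairwise L v).imp ne_of_lt

lemma promChainFrom_last_max (L : Labeling P) (v : P) :
    ∀ z, ¬ ((promChainFrom L v).getLast (promChainFrom_ne_nil L v) < z) := by
  induction v using promChainFrom.induct (L := L) with
  | case1 v h IH =>
    intro z hz
    have hC : promChainFrom L v = v :: promChainFrom L (lSucc L v h) := by
      rw [promChainFrom]; rw [dif_pos h]
    have hlast : (promChainFrom L v).getLast (promChainFrom_ne_nil L v)
        = (promChainFrom L (lSucc L v h)).getLast (promChainFrom_ne_nil L _) := by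
      rw [List.getLast_congr _ (by simp [promChainFrom_ne_nil]) hC, List.getLast_cons (promChainFrom_ne_nil L _)]
    rw [hlast] at hz
    exact IH z hz
  | case2 v h =>
    intro z hz
    have hC : promChainFrom L v = [v] := by
      rw [promChainFrom]; rw [dif_neg h]
    have hlast : (promChainFrom L v).getLast (promChainFrom_ne_nil L v) = v := by
      rw [List.getLast_congr _ (by simp) hC]; rfl
    rw [hlast] at hz
    exact h ⟨z, by simp [hz]⟩

/-- The promotion chain of `M`, starting from the element with label 1. -/
def pchain (M : Labeling P) (hP : Nonempty P) : List P :=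
  promChainFrom M (M.symm ⟨0, @Fintype.card_pos P _ hP⟩)

lemma pchain_ne_nil (M : Labeling P) (hP : Nonempty P) : pchain M hP ≠ [] :=
  promChainFrom_ne_nil M _

lemma pchain_head (M : Labeling P) (hP : Nonempty P) :
    ∃ t, pchain M hP = M.symm ⟨0, @Fintype.card_pos P _ hP⟩ :: t :=
  promChainFrom_head M _

lemma pchain_nodup (M : Labeling P) (hP : Nonempty P) : (pchain M hP).Nodup :=
  promChainFrom_nodup M _

lemma pchain_consec (M : Labeling P) (hP : Nonempty P) :
    ∀ i (hi : i + 1 < (pchain M hP).length),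
      (pchain M hP)[i] < (pchain M hP)[i + 1] ∧
        ∀ z, (pchain M hP)[i] < z → M ((pchain M hP)[i + 1]) ≤ M z :=
  promChainFrom_consec M _

lemma pchain_last_max (M : Labeling P) (hP : Nonempty P) :
    ∀ z, ¬ ((pchain M hP).getLast (pchain_ne_nil M hP) < z) :=
  promChainFrom_last_max M _

lemma promote_apply (M : Labeling P) (hP : Nonempty P) (x : P) :
    promote M x = (finRotate (Fintype.card P)).symm (M ((pchain M hP).formPerm x)) := by
  rw [promote, dif_pos hP]
  rfl

lemma label_zero_mem_pchain (M : Labeling P) (hP : Nonempty P) {x : P}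
    (hx : (M x : ℕ) = 0) : x ∈ pchain M hP := by
  obtain ⟨t, ht⟩ := pchain_head M hP
  have : x = M.symm ⟨0, @Fintype.card_pos P _ hP⟩ := by
    apply_fun M
    rw [Equiv.apply_symm_apply]
    exact Fin.ext hx
  rw [this, ht]
  exact List.mem_cons_self

lemma finRotate_symm_val {n : ℕ} (a : Fin n) :
    ((finRotate n).symm a : ℕ) = if (a : ℕ) = 0 then n - 1 else (a : ℕ) - 1 := by
  match n with
  | 0 => exact absurd a.2 (by omega)
  | (n + 1) =>
    have h1 : (finRotate (n + 1)).symm a = a - 1 := by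
      rw [Equiv.symm_apply_eq, finRotate_succ_apply, sub_add_cancel]
    rw [h1, Fin.coe_sub_one]
    by_cases h0 : a = 0
    · simp [h0]
    · have h0' : (a : ℕ) ≠ 0 := fun hc => h0 (Fin.ext (by simp [hc]))
      rw [if_neg h0, if_neg h0']

lemma promote_val_of_not_mem (M : Labeling P) (hP : Nonempty P) {x : P}
    (hx : x ∉ pchain M hP) :
    (promote M x : ℕ) = (M x : ℕ) - 1 ∧ (M x : ℕ) ≠ 0 := by
  have hne : (M x : ℕ) ≠ 0 := fun hc => hx (label_zero_mem_pchain M hP hc)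
  rw [promote_apply M hP, List.formPerm_apply_of_notMem hx, finRotate_symm_val,
    if_neg hne]
  exact ⟨rfl, hne⟩

lemma promote_val_getElem (M : Labeling P) (hP : Nonempty P) {i : ℕ}
    (hi : i + 1 < (pchain M hP).length) :
    (promote M ((pchain M hP)[i]'(by omega)) : ℕ) = (M ((pchain M hP)[i + 1]) : ℕ) - 1 ∧
      (M ((pchain M hP)[i + 1]) : ℕ) ≠ 0 := by
  have hform : (pchain M hP).formPerm ((pchain M hP)[i]'(by omega)) = (pchain M hP)[i + 1] := by
    rw [List.formPerm_apply_getElem _ (pchain_nodup M hP) i (by omega)]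
    congr 1
    exact Nat.mod_eq_of_lt hi
  have hne : (M ((pchain M hP)[i + 1]) : ℕ) ≠ 0 := by
    intro hc
    have hmem := label_zero_mem_pchain M hP hc
    obtain ⟨t, ht⟩ := pchain_head M hP
    have h0 : (pchain M hP)[0]'(by omega) = M.symm ⟨0, @Fintype.card_pos P _ hP⟩ := by
      simp [ht]
    have heq : (pchain M hP)[i + 1] = (pchain M hP)[0]'(by omega) := by
      rw [h0]
      apply_fun M
      rw [Equiv.apply_symm_apply]
      exact Fin.ext hc
    have := (List.Nodup.getElem_inj_iff (pchain_nodup M hP)).mp heq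
    omega
  rw [promote_apply M hP, hform, finRotate_symm_val, if_neg hne]
  exact ⟨rfl, hne⟩

lemma promote_val_getLast (M : Labeling P) (hP : Nonempty P) :
    (promote M ((pchain M hP).getLast (pchain_ne_nil M hP)) : ℕ) = Fintype.card P - 1 := by
  obtain ⟨t, ht⟩ := pchain_head M hP
  have hform : (pchain M hP).formPerm ((pchain M hP).getLast (pchain_ne_nil M hP))
      = M.symm ⟨0, @Fintype.card_pos P _ hP⟩ := by
    have hlast : (pchain M hP).getLast (pchain_ne_nil M hP)
        = (M.symm ⟨0, @Fintype.card_pos P _ hP⟩ :: t).getLast (List.cons_ne_nil _ _) :=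
      List.getLast_congr _ (by simp) ht
    rw [hlast, ht]
    exact List.formPerm_apply_getLast _ _
  rw [promote_apply M hP, hform, Equiv.apply_symm_apply, finRotate_symm_val]
  simp

/-- Labels `≥ j` form an upper set. -/
def GoodAt (M : Labeling P) (j : ℕ) : Prop :=
  ∀ ⦃x y : P⦄, x ≤ y → j ≤ (M x : ℕ) → j ≤ (M y : ℕ)

lemma pchain_mem_cases (M : Labeling P) (hP : Nonempty P) {x : P} (hx : x ∈ pchain M hP) :
    (∃ i, ∃ hi : i + 1 < (pchain M hP).length, x = (pchain M hP)[i]'(by omega)) ∨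
      x = (pchain M hP).getLast (pchain_ne_nil M hP) := by
  obtain ⟨i, hi, hieq⟩ := List.mem_iff_getElem.mp hx
  rcases lt_or_ge (i + 1) (pchain M hP).length with h | h
  · exact Or.inl ⟨i, h, hieq.symm⟩
  · right
    rw [List.getLast_eq_getElem]
    rw [← hieq]
    congr 1
    omega

lemma pchain_getElem_zero (M : Labeling P) (hP : Nonempty P)
    (h0 : 0 < (pchain M hP).length) :
    (M ((pchain M hP)[0]'h0) : ℕ) = 0 := by
  obtain ⟨t, ht⟩ := pchain_head M hP
  have : (pchain M hP)[0]'h0 = M.symm ⟨0, @Fintype.card_pos P _ hP⟩ := by simp [ht]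
  rw [this, Equiv.apply_symm_apply]

lemma promote_val_ge (M : Labeling P) (hP : Nonempty P) {t : ℕ} (hG : GoodAt M t)
    {z : P} (hz : t ≤ (M z : ℕ)) : t - 1 ≤ (promote M z : ℕ) := by
  by_cases hzC : z ∈ pchain M hP
  · rcases pchain_mem_cases M hP hzC with ⟨i, hi, hieq⟩ | hlast
    · obtain ⟨hval, _⟩ := promote_val_getElem M hP hi
      rw [← hieq] at hval
      have hlt : z < (pchain M hP)[i + 1] := by
        have := (pchain_consec M hP i hi).1
        rwa [← hieq] at this
      have : t ≤ (M ((pchain M hP)[i + 1]) : ℕ) := hG hlt.le hz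
      omega
    · rw [hlast, promote_val_getLast M hP]
      have : (M z : ℕ) < Fintype.card P := (M z).isLt
      omega
  · obtain ⟨hval, hne⟩ := promote_val_of_not_mem M hP hzC
    omega

/-- Lemma A: promotion shifts frozen thresholds down by one. -/
lemma goodAt_promote (M : Labeling P) (hP : Nonempty P) {j : ℕ} (hj : 1 ≤ j)
    (hG : GoodAt M j) : GoodAt (promote M) (j - 1) := by
  intro x y hxy hx
  rcases eq_or_lt_of_le hxy with rfl | hlt
  · exact hx
  by_cases hxC : x ∈ pchain M hP
  · rcases pchain_mem_cases M hP hxC with ⟨i, hi, hieq⟩ | hlast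
    · obtain ⟨hval, hne⟩ := promote_val_getElem M hP hi
      rw [← hieq] at hval
      have hjsucc : j ≤ (M ((pchain M hP)[i + 1]) : ℕ) := by omega
      have hminy : M ((pchain M hP)[i + 1]) ≤ M y := by
        apply (pchain_consec M hP i hi).2
        rwa [← hieq]
      have hy : j ≤ (M y : ℕ) := le_trans hjsucc hminy
      exact promote_val_ge M hP hG hy
    · rw [hlast] at hlt
      exact absurd hlt (pchain_last_max M hP y)
  · obtain ⟨hval, hne⟩ := promote_val_of_not_mem M hP hxC
    have hxj : j ≤ (M x : ℕ) := by omega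
    exact promote_val_ge M hP hG (hG hxy hxj)

/-- Claim C: if the maximal unfrozen label sits on the promotion chain, the
threshold below it becomes good after promotion. -/
lemma goodAt_promote_chain (M : Labeling P) (hP : Nonempty P) {t : ℕ} (ht2 : 2 ≤ t)
    (hG : ∀ j, t ≤ j → GoodAt M j) {q : P} (hq : (M q : ℕ) = t - 1)
    (hqC : q ∈ pchain M hP) : GoodAt (promote M) (t - 2) := by
  have hGp : GoodAt (promote M) (t - 1) := goodAt_promote M hP (by omega) (hG t le_rfl)
  obtain ⟨iq, hiq, hiq_eq⟩ := List.mem_iff_getElem.mp hqC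
  have hiq0 : 0 < iq := by
    rcases Nat.eq_zero_or_pos iq with h0 | h0
    · subst h0
      have h00 := pchain_getElem_zero M hP hiq
      rw [hiq_eq] at h00
      omega
    · exact h0
  -- F1 : everything strictly above q is frozen
  have hF1 : ∀ z, q < z → t ≤ (M z : ℕ) := by
    intro z hz
    have hcons := pchain_consec M hP (iq - 1) (by omega)
    have hrw : iq - 1 + 1 = iq := by omega
    have hmin : M ((pchain M hP)[iq - 1 + 1]'(by omega)) ≤ M z := by
      apply hcons.2
      calc (pchain M hP)[iq - 1]'(by omega) < (pchain M hP)[iq - 1 + 1]'(by omega) := hcons.1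
        _ = q := by rw [getElem_congr_idx hrw, hiq_eq]
        _ < z := hz
    have hmin' : (M q : ℕ) ≤ (M z : ℕ) := by
      have : (pchain M hP)[iq - 1 + 1]'(by omega) = q := by
        rw [getElem_congr_idx hrw, hiq_eq]
      rw [this] at hmin
      exact hmin
    rcases eq_or_lt_of_le hmin' with heq | hlt
    · exfalso
      have : q = z := M.injective (Fin.ext heq)
      exact absurd hz (by rw [this]; exact lt_irrefl z)
    · omega
  -- F3 : q's new label is at least t - 2
  have hF3 : t - 2 ≤ (promote M q : ℕ) := by
    rcases pchain_mem_cases M hP hqC with ⟨i, hi, hieq⟩ | hlast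
    · obtain ⟨hval, _⟩ := promote_val_getElem M hP hi
      rw [← hieq] at hval
      have hgt : q < (pchain M hP)[i + 1] := by
        have := (pchain_consec M hP i hi).1
        rwa [← hieq] at this
      have := hF1 _ hgt
      omega
    · rw [hlast, promote_val_getLast M hP]
      have : (M q : ℕ) < Fintype.card P := (M q).isLt
      omega
  -- F4 : the element just below q on the chain gets new label t - 2
  have hF4 : (promote M ((pchain M hP)[iq - 1]'(by omega)) : ℕ) = t - 2 := by
    obtain ⟨hval, _⟩ := promote_val_getElem M hP (i := iq - 1) (by omega)
    rw [hval, getElem_congr_idx (by omega : iq - 1 + 1 = iq), hiq_eq, hq]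
    omega
  -- main upper-set argument
  intro x y hxy hx
  rcases eq_or_lt_of_le hxy with rfl | hlt
  · exact hx
  by_cases hx1 : t - 1 ≤ (promote M x : ℕ)
  · have := hGp hxy hx1
    omega
  · have hxval : (promote M x : ℕ) = t - 2 := by omega
    have hxeq : x = (pchain M hP)[iq - 1]'(by omega) := by
      apply (promote M).injective
      exact Fin.ext (by rw [hxval, hF4])
    have hymin : M ((pchain M hP)[iq - 1 + 1]'(by omega)) ≤ M y := by
      apply (pchain_consec M hP (iq - 1) (by omega)).2
      rwa [← hxeq]
    have hyq : t - 1 ≤ (M y : ℕ) := by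
      have : (pchain M hP)[iq - 1 + 1]'(by omega) = q := by
        rw [getElem_congr_idx (by omega : iq - 1 + 1 = iq), hiq_eq]
      rw [this] at hymin
      omega
    rcases eq_or_lt_of_le hyq with heq | hlt2
    · have : y = q := M.injective (Fin.ext (by omega))
      rw [this]
      exact hF3
    · have hyt : t ≤ (M y : ℕ) := by omega
      have := promote_val_ge M hP (hG t le_rfl) hyt
      omega

/-- The invariant carried through the promotion process. -/
def InvT (M : Labeling P) (t : ℕ) : Prop :=
  (∀ j, t ≤ j → GoodAt M j) ∧
    (GoodAt M (t - 1) ∨ ∃ p q : P, p < q ∧ (M q : ℕ) = t - 1)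

lemma invT_promote (M : Labeling P) (hP : Nonempty P) {t : ℕ} (ht : 3 ≤ t)
    (h : InvT M t) : InvT (promote M) (t - 1) := by
  obtain ⟨hG, hD⟩ := h
  constructor
  · intro j hj
    have := goodAt_promote M hP (j := j + 1) (by omega) (hG (j + 1) (by omega))
    simpa using this
  · rcases hD with hGood | ⟨p, q, hpq, hq⟩
    · left
      exact goodAt_promote M hP (j := t - 1) (by omega) hGood
    · by_cases hqC : q ∈ pchain M hP
      · left
        have := goodAt_promote_chain M hP (by omega) hG hq hqC
        rwa [show t - 1 - 1 = t - 2 by omega]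
      · right
        obtain ⟨hval, hne⟩ := promote_val_of_not_mem M hP hqC
        exact ⟨p, q, hpq, by omega⟩

lemma isLinearExt_of_invT (M : Labeling P) (h : InvT M 2) : IsLinearExt M := by
  obtain ⟨hG, hD⟩ := h
  intro x y hxy
  show (M x : ℕ) ≤ (M y : ℕ)
  rcases Nat.lt_or_ge (M x : ℕ) 2 with hx2 | hx2
  · rcases Nat.lt_or_ge (M x : ℕ) 1 with hx1 | hx1
    · omega
    · have hx1' : (M x : ℕ) = 1 := by omega
      rcases hD with hGood | ⟨p, q, hpq, hq⟩
      · have := hGood hxy (by omega)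
        omega
      · have hqx : q = x := M.injective (Fin.ext (by omega))
        subst hqx
        by_contra hcon
        have hy0 : (M y : ℕ) = 0 := by omega
        have hpy : p < y := lt_of_lt_of_le hpq hxy
        rcases Nat.lt_or_ge (M p : ℕ) 2 with hp2 | hp2
        · rcases Nat.lt_or_ge (M p : ℕ) 1 with hp1 | hp1
          · exact absurd (M.injective (Fin.ext (by omega)) : p = y) (ne_of_lt hpy)
          · have : p = q := M.injective (Fin.ext (by omega))
            exact absurd this (ne_of_lt hpq)
        · have := hG (M p : ℕ) hp2 hpy.le le_rfl
          omega
  · have := hG (M x : ℕ) hx2 hxy le_rfl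
    omega

/-- If `L` is a tangled labeling of `P`, then `L⁻¹(n)` is a minimal
element of `P`. -/
theorem tangled_label_n_minimal (L : Labeling P) (h : IsTangled L) :
    IsMin (L.symm ⟨Fintype.card P - 1,
      Nat.sub_lt (lt_of_lt_of_le (by norm_num) h.1) Nat.one_pos⟩) := by
  obtain ⟨hn, hnl⟩ := h
  by_contra hmin
  apply hnl
  have hP : Nonempty P := Fintype.card_pos_iff.mp (by omega)
  obtain ⟨y, hy⟩ := not_isMin_iff.mp hmin
  have hbase : InvT L (Fintype.card P) := by
    constructor
    · intro j hj x z hxz hx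
      have := (L x).isLt
      omega
    · right
      refine ⟨y, _, hy, ?_⟩
      simp
  have hiter : ∀ k, k ≤ Fintype.card P - 2 →
      InvT (promote^[k] L) (Fintype.card P - k) := by
    intro k
    induction k with
    | zero => intro _; simpa using hbase
    | succ k IH =>
      intro hk
      have h1 := invT_promote (promote^[k] L) hP
        (t := Fintype.card P - k) (by omega) (IH (by omega))
      rw [Function.iterate_succ_apply']
      rwa [show Fintype.card P - k - 1 = Fintype.card P - (k + 1) by omega] at h1
  have h2 := hiter (Fintype.card P - 2) le_rfl
  rw [show Fintype.card P - (Fintype.card P - 2) = 2 by omega] at h2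
  exact isLinearExt_of_invT _ h2


end
end

section
/- Let P be an N-element poset, let x ∈ P, and let X = {y ∈ P : y <_P x} be nonempty. Suppose that every element of P that is comparable with some element of X is also comparable with x, and suppose X is partitioned into disjoint subsets A and B such that no element of A is comparable with any element of B. Fix an injective map M : P ∖ X → {1,…,N} such that every labeling L of P with L|_{P∖X} = M satisfies ∂^{N−1}(L)⁻¹(1) ∈ X. Then the number of labelings L of P with L|_{P∖X} = M satisfying ∂^{N−1}(L)⁻¹(1) ∈ A equals |A| · (|X| − 1)!; equivalently, for L chosen uniformly at random among the |X|! labelings extending M, the probability that ∂^{N−1}(L)⁻¹(1) ∈ A is |A|/|X|. -/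
open scoped Classical

noncomputable section

variable {P : Type*} [Fintype P] [PartialOrder P]

/-! ### Auxiliary development for Statement 16 -/

namespace Stmt16

variable {P : Type*} [Fintype P] [PartialOrder P]

/-- the set of strict upper bounds, as a finset -/
def ups (v : P) : Finset P := Finset.univ.filter fun y => v < y

lemma mem_ups {v w : P} : w ∈ ups v ↔ v < w := by simp [ups]

lemma lSucc_mem (L : Labeling P) (v : P) (h : (ups v).Nonempty) :
    v < lSucc L v h := lt_lSucc L v h

lemma lSucc_le (L : Labeling P) (v : P) (h : (ups v).Nonempty) {w : P}
    (hw : v < w) : L (lSucc L v h) ≤ L w := by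
  have : lSucc L v h = L.symm (((ups v).image L).min' (h.image _)) := rfl
  rw [this, Equiv.apply_symm_apply]
  exact Finset.min'_le _ _ (Finset.mem_image_of_mem _ (mem_ups.mpr hw))

lemma lSucc_unique (L : Labeling P) (v : P) (h : (ups v).Nonempty) {w : P}
    (hw : v < w) (hmin : ∀ w', v < w' → L w ≤ L w') : lSucc L v h = w := by
  have h1 := lSucc_le L v h hw
  have h2 := hmin _ (lSucc_mem L v h)
  have : L (lSucc L v h) = L w := le_antisymm h1 h2
  exact L.injective this

lemma promChainFrom_eq (L : Labeling P) (v : P) :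
    promChainFrom L v =
      if h : (ups v).Nonempty then v :: promChainFrom L (lSucc L v h) else [v] := by
  rw [promChainFrom]; rfl

lemma promChainFrom_ne_nil (L : Labeling P) (v : P) : promChainFrom L v ≠ [] := by
  rw [promChainFrom_eq]
  split <;> simp

lemma promChainFrom_cons (L : Labeling P) (v : P) :
    ∃ t, promChainFrom L v = v :: t := by
  rw [promChainFrom_eq]
  split <;> exact ⟨_, rfl⟩

/-- strong-induction principle keyed to the recursion of `promChainFrom` -/
lemma pcf_induction (L : Labeling P) (C : P → Prop)
    (ih : ∀ v, (∀ h : (ups v).Nonempty, C (lSucc L v h)) → C v) : ∀ v, C v := by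
  intro v
  have : ∀ n (v : P), (ups v).card ≤ n → C v := by
    intro n
    induction n with
    | zero =>
      intro v hv
      refine ih v fun h => absurd (Finset.card_eq_zero.mp (Nat.le_zero.mp hv)) ?_
      exact Finset.Nonempty.ne_empty h
    | succ n IH =>
      intro v hv
      refine ih v fun h => IH _ ?_
      have hlt : (ups (lSucc L v h)).card < (ups v).card := by
        apply Finset.card_lt_card
        refine (Finset.ssubset_iff_of_subset ?_).mpr ?_
        · intro z hz
          rw [mem_ups] at *
          exact lt_trans (lt_lSucc L v h) hz
        · exact ⟨lSucc L v h, mem_ups.mpr (lt_lSucc L v h), by simp [mem_ups]⟩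
      omega
  exact this _ v le_rfl

lemma promChainFrom_chain' (L : Labeling P) (v : P) :
    List.Chain' (· < ·) (promChainFrom L v) := by
  induction v using pcf_induction L with
  | ih v ih =>
    rw [promChainFrom_eq]
    split
    · rename_i h
      obtain ⟨t, ht⟩ := promChainFrom_cons L (lSucc L v h)
      refine List.IsChain.cons (ih h) ?_
      intro y hy
      rw [ht] at hy
      simp only [List.head?_cons, Option.mem_def, Option.some.injEq] at hy
      subst hy
      exact lt_lSucc L v h
    · exact List.isChain_singleton _

lemma promChainFrom_nodup (L : Labeling P) (v : P) :
    (promChainFrom L v).Nodup := by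
  have : IsTrans P (· < ·) := ⟨fun _ _ _ => lt_trans⟩
  have h2 := (List.isChain_iff_pairwise (l := promChainFrom L v)).mp
    (promChainFrom_chain' L v)
  exact h2.imp ne_of_lt

/-- members of the chain are above the start -/
lemma promChainFrom_le (L : Labeling P) (v : P) {w : P}
    (hw : w ∈ promChainFrom L v) : v ≤ w := by
  induction v using pcf_induction L with
  | ih v ih =>
    rw [promChainFrom_eq] at hw
    split at hw
    · rename_i h
      rcases List.mem_cons.mp hw with rfl | hw
      · exact le_rfl
      · exact le_of_lt (lt_of_lt_of_le (lt_lSucc L v h) (ih h hw))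
    · simp at hw
      subst hw; exact le_rfl


section PromoteSpec

variable [Nonempty P]

/-- the zero label -/
def zer (P : Type*) [Fintype P] [Nonempty P] : Fin (Fintype.card P) := ⟨0, Fintype.card_pos⟩

/-- the promotion chain of a labeling -/
def chainOf (L : Labeling P) : List P := promChainFrom L (L.symm (zer P))

/-- shorthand for the inverse rotation -/
def rS (P : Type*) [Fintype P] : Fin (Fintype.card P) ≃ Fin (Fintype.card P) :=
  (finRotate (Fintype.card P)).symm

lemma promote_apply (L : Labeling P) (z : P) :
    promote L z = rS P (L ((chainOf L).formPerm z)) := by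
  rw [promote, dif_pos ‹Nonempty P›]
  rfl

lemma chainOf_ne_nil (L : Labeling P) : chainOf L ≠ [] := promChainFrom_ne_nil L _

lemma chainOf_nodup (L : Labeling P) : (chainOf L).Nodup := promChainFrom_nodup L _

lemma promote_apply_not_mem (L : Labeling P) {z : P} (hz : z ∉ chainOf L) :
    promote L z = rS P (L z) := by
  rw [promote_apply, List.formPerm_apply_of_notMem hz]

lemma promote_apply_getElem (L : Labeling P) (i : ℕ) (h : i + 1 < (chainOf L).length) :
    promote L (chainOf L)[i] = rS P (L (chainOf L)[i + 1]) := by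
  rw [promote_apply, List.formPerm_apply_lt_getElem _ (chainOf_nodup L) _ h]

lemma promote_apply_getLast (L : Labeling P) :
    promote L ((chainOf L).getLast (chainOf_ne_nil L)) = rS P (zer P) := by
  obtain ⟨t, ht⟩ := promChainFrom_cons L (L.symm (zer P))
  have ht' : chainOf L = L.symm (zer P) :: t := ht
  rw [promote_apply]
  simp only [ht', List.formPerm_apply_getLast, Equiv.apply_symm_apply]

lemma chainOf_getElem_zero (L : Labeling P) (h : 0 < (chainOf L).length) :
    (chainOf L)[0] = L.symm (zer P) := by
  obtain ⟨t, ht⟩ := promChainFrom_cons L (L.symm (zer P))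
  have ht' : chainOf L = L.symm (zer P) :: t := ht
  simp [ht']

end PromoteSpec

section Structure

variable {x : P} {X : Set P}

lemma lt_of_memX (hX : X = {y : P | y < x}) {w : P} (hw : w ∈ X) : w < x := by
  rw [hX] at hw; exact hw

lemma not_memX_of_le (hX : X = {y : P | y < x}) {u : P} (hu : x ≤ u) : u ∉ X := by
  intro h
  exact absurd (lt_of_le_of_lt hu (lt_of_memX hX h)) (lt_irrefl x)

lemma memX_lt_of_le (hX : X = {y : P | y < x}) {w u : P} (hw : w ∈ X) (hu : x ≤ u) :
    w < u := lt_of_lt_of_le (lt_of_memX hX hw) hu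

/-- upper sets of elements outside `X` avoid `X` -/
lemma upsO (hX : X = {y : P | y < x}) {z w : P} (hz : z ∉ X) (hzw : z < w) : w ∉ X := by
  intro hw
  exact hz (by rw [hX]; exact lt_trans hzw (lt_of_memX hX hw))

/-- A "side" of the partition: a subset of `X` closed in the appropriate sense. -/
def GoodSide (x : P) (X S : Set P) : Prop :=
  S ⊆ X ∧ ∀ v ∈ S, ∀ w : P, v < w → w ∈ S ∨ x ≤ w

lemma goodSide_left (hX : X = {y : P | y < x})
    (hcomp : ∀ z : P, (∃ w ∈ X, z ≤ w ∨ w ≤ z) → (z ≤ x ∨ x ≤ z))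
    {A B : Set P} (hunion : A ∪ B = X)
    (hinc : ∀ a ∈ A, ∀ b ∈ B, ¬ (a ≤ b ∨ b ≤ a)) : GoodSide x X A := by
  constructor
  · rw [← hunion]; exact Set.subset_union_left
  · intro v hv w hvw
    by_cases hwX : w ∈ X
    · rw [← hunion] at hwX
      rcases hwX with hwA | hwB
      · exact Or.inl hwA
      · exact absurd (Or.inl (le_of_lt hvw)) (hinc v hv w hwB)
    · have hvX : v ∈ X := by rw [← hunion]; exact Or.inl hv
      rcases hcomp w ⟨v, hvX, Or.inr (le_of_lt hvw)⟩ with hwx | hxw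
      · rcases lt_or_eq_of_le hwx with hlt | rfl
        · exact absurd (by rw [hX]; exact hlt) hwX
        · exact Or.inr le_rfl
      · exact Or.inr hxw

/-- the finset of elements above (or equal to) `x` -/
def Ufin (x : P) : Finset P := Finset.univ.filter fun y => x ≤ y

lemma x_mem_Ufin : x ∈ Ufin x := by simp [Ufin]

lemma mem_Ufin {u : P} : u ∈ Ufin x ↔ x ≤ u := by simp [Ufin]

/-- the minimal label on `U` -/
def mVal (L : Labeling P) (x : P) : Fin (Fintype.card P) :=
  ((Ufin x).image L).min' (Finset.Nonempty.image ⟨x, x_mem_Ufin⟩ _)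

/-- the element of `U` with minimal label -/
def uStar (L : Labeling P) (x : P) : P := L.symm (mVal L x)

lemma uStar_mem (L : Labeling P) : x ≤ uStar L x := by
  have := Finset.min'_mem ((Ufin x).image L) (Finset.Nonempty.image ⟨x, x_mem_Ufin⟩ _)
  obtain ⟨u, hu, hLu⟩ := Finset.mem_image.mp this
  have : uStar L x = u := by rw [uStar, mVal, ← hLu, Equiv.symm_apply_apply]
  rw [this]
  exact mem_Ufin.mp hu

lemma L_uStar (L : Labeling P) : L (uStar L x) = mVal L x := by
  rw [uStar, Equiv.apply_symm_apply]

lemma mVal_le (L : Labeling P) {u : P} (hu : x ≤ u) : mVal L x ≤ L u :=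
  Finset.min'_le _ _ (Finset.mem_image_of_mem _ (mem_Ufin.mpr hu))

lemma uStar_not_memX (hX : X = {y : P | y < x}) (L : Labeling P) : uStar L x ∉ X :=
  not_memX_of_le hX (uStar_mem L)

section Congr

variable {L L' : Labeling P}

lemma mVal_congr (hX : X = {y : P | y < x}) (hO : ∀ z ∉ X, L' z = L z) :
    mVal L' x = mVal L x := by
  have : (Ufin x).image L' = (Ufin x).image L := by
    apply Finset.image_congr
    intro u hu
    exact hO u (not_memX_of_le hX (mem_Ufin.mp hu))
  rw [mVal, mVal]
  congr 1

lemma uStar_congr (hX : X = {y : P | y < x}) (hO : ∀ z ∉ X, L' z = L z) :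
    uStar L' x = uStar L x := by
  have h1 : L' (uStar L x) = mVal L' x := by
    rw [hO _ (uStar_not_memX hX L), L_uStar, mVal_congr hX hO]
  have h2 := congrArg L'.symm h1
  rw [Equiv.symm_apply_apply] at h2
  rw [uStar]; exact h2.symm

lemma pcf_congr (hX : X = {y : P | y < x}) (hO : ∀ z ∉ X, L' z = L z) :
    ∀ v, v ∉ X → promChainFrom L v = promChainFrom L' v := by
  intro v
  induction v using pcf_induction L with
  | ih v ih =>
    intro hv
    rw [promChainFrom_eq L v, promChainFrom_eq L' v]
    split
    · rename_i h
      have hsucc : lSucc L' v h = lSucc L v h := by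
        apply lSucc_unique
        · exact lt_lSucc L v h
        · intro w' hw'
          rw [hO _ (upsO hX hv (lt_lSucc L v h)), hO _ (upsO hX hv hw')]
          exact lSucc_le L v h hw'
      rw [hsucc, ih h (upsO hX hv (lt_lSucc L v h))]
    · rfl

lemma chainO_notX (hX : X = {y : P | y < x}) (L : Labeling P) :
    ∀ v, v ∉ X → ∀ w ∈ promChainFrom L v, w ∉ X := by
  intro v
  induction v using pcf_induction L with
  | ih v ih =>
    intro hv w hw
    rw [promChainFrom_eq] at hw
    split at hw
    · rename_i h
      rcases List.mem_cons.mp hw with rfl | hw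
      · exact hv
      · exact ih h (upsO hX hv (lt_lSucc L v h)) w hw
    · simp at hw
      subst hw; exact hv

/-- decomposition of the promotion chain started inside a side `S` -/
lemma decompS (hX : X = {y : P | y < x}) {S : Set P} (hGS : GoodSide x X S)
    (L : Labeling P) :
    ∀ v, v ∈ S → ∃ p, p ≠ [] ∧ (∀ w ∈ p, w ∈ S) ∧
      promChainFrom L v = p ++ promChainFrom L (uStar L x) := by
  intro v
  induction v using pcf_induction L with
  | ih v ih =>
    intro hv
    have hvx : v < x := lt_of_memX hX (hGS.1 hv)
    have h : (ups v).Nonempty := ⟨x, mem_ups.mpr hvx⟩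
    rw [promChainFrom_eq L v, dif_pos h]
    rcases hGS.2 v hv (lSucc L v h) (lt_lSucc L v h) with hS | hU
    · obtain ⟨p, hp1, hp2, hp3⟩ := ih h hS
      refine ⟨v :: p, List.cons_ne_nil _ _, ?_, ?_⟩
      · intro w hw
        rcases List.mem_cons.mp hw with rfl | hw
        · exact hv
        · exact hp2 w hw
      · rw [hp3]; rfl
    · have heq : lSucc L v h = uStar L x := by
        have h1 : mVal L x ≤ L (lSucc L v h) := mVal_le L hU
        have h2 : L (lSucc L v h) ≤ L (uStar L x) :=
          lSucc_le L v h (memX_lt_of_le hX (hGS.1 hv) (uStar_mem L))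
        rw [L_uStar] at h2
        have : L (lSucc L v h) = mVal L x := le_antisymm h2 h1
        have := congrArg L.symm this
        rwa [Equiv.symm_apply_apply] at this
      refine ⟨[v], List.cons_ne_nil _ _, ?_, ?_⟩
      · intro w hw
        simp at hw; subst hw; exact hv
      · rw [heq]; rfl

end Congr

end Structure

section Step

variable [Nonempty P] {x : P} {X : Set P}

lemma promote_on_suffix {L : Labeling P} {p q : List P}
    (hc : chainOf L = p ++ q) :
    (∀ j (hj : j + 1 < q.length), promote L q[j] = rS P (L q[j+1])) ∧
    (∀ hq : q ≠ [], promote L (q.getLast hq) = rS P (zer P)) := by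
  have hlen : (chainOf L).length = p.length + q.length := by rw [hc, List.length_append]
  constructor
  · intro j hj
    have hi : p.length + j < (chainOf L).length := by omega
    have hi1 : p.length + j + 1 < (chainOf L).length := by omega
    have e1 : (chainOf L)[p.length + j] = q[j] := by
      rw [List.getElem_of_eq hc, List.getElem_append_right (by omega)]
      simp only [show p.length + j - p.length = j from by omega]
    have e2 : (chainOf L)[p.length + j + 1] = q[j+1] := by
      rw [List.getElem_of_eq hc, List.getElem_append_right (by omega)]
      simp only [show p.length + j + 1 - p.length = j + 1 from by omega]
    have := promote_apply_getElem L (p.length + j) hi1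
    rw [e1, e2] at this
    exact this
  · intro hq
    have h1 : (chainOf L).getLast (chainOf_ne_nil L) = q.getLast hq := by
      have hpq : p ++ q ≠ [] := fun h => hq (List.append_eq_nil_iff.mp h).2
      rw [List.getLast_congr _ hpq hc, List.getLast_append]
      rw [dif_neg (by simpa using hq)]
    rw [← h1]
    exact promote_apply_getLast L

lemma z0_congr {L L' : Labeling P} (hX : X = {y : P | y < x})
    (hO : ∀ z ∉ X, L' z = L z) (h : L.symm (zer P) ∉ X) :
    L'.symm (zer P) = L.symm (zer P) := by
  have : L' (L.symm (zer P)) = zer P := by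
    rw [hO _ h, Equiv.apply_symm_apply]
  have h2 := congrArg L'.symm this
  rw [Equiv.symm_apply_apply] at h2
  exact h2.symm

lemma z0_memX_congr {L L' : Labeling P} (hX : X = {y : P | y < x})
    (hO : ∀ z ∉ X, L' z = L z) (h : L.symm (zer P) ∈ X) :
    L'.symm (zer P) ∈ X := by
  by_contra h'
  have : L (L'.symm (zer P)) = zer P := by
    rw [← hO _ h', Equiv.apply_symm_apply]
  have := congrArg L.symm this
  rw [Equiv.symm_apply_apply] at this
  rw [this] at h'
  exact h' h

/-- splitting of the promotion chain into its `X`-part and its part outside `X` -/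
lemma chain_split (hX : X = {y : P | y < x}) {A B : Set P}
    (hGSA : GoodSide x X A) (hGSB : GoodSide x X B) (hunion : A ∪ B = X)
    (L : Labeling P) :
    (L.symm (zer P) ∉ X ∧ chainOf L = [] ++ promChainFrom L (L.symm (zer P))) ∨
    (L.symm (zer P) ∈ X ∧ ∃ p, (∀ w ∈ p, w ∈ X) ∧
      chainOf L = p ++ promChainFrom L (uStar L x)) := by
  by_cases h : L.symm (zer P) ∈ X
  · right
    refine ⟨h, ?_⟩
    have h' : L.symm (zer P) ∈ A ∪ B := by rw [hunion]; exact h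
    rcases h' with hA | hB
    · obtain ⟨p, _, hp2, hp3⟩ := decompS hX hGSA L _ hA
      exact ⟨p, fun w hw => hGSA.1 (hp2 w hw), hp3⟩
    · obtain ⟨p, _, hp2, hp3⟩ := decompS hX hGSB L _ hB
      exact ⟨p, fun w hw => hGSB.1 (hp2 w hw), hp3⟩
  · left
    exact ⟨h, rfl⟩

/-- core congruence: if two labelings' chains share the suffix outside `X` and the
labelings agree outside `X`, the promotions agree outside `X`. -/
lemma promote_congr_core {L L' : Labeling P} {p p' q : List P}
    (hcL : chainOf L = p ++ q) (hcL' : chainOf L' = p' ++ q)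
    (hpX : ∀ w ∈ p, w ∈ X) (hp'X : ∀ w ∈ p', w ∈ X) (hqX : ∀ w ∈ q, w ∉ X)
    (hO : ∀ z ∉ X, L' z = L z) :
    ∀ z ∉ X, promote L' z = promote L z := by
  intro z hz
  by_cases hzq : z ∈ q
  · obtain ⟨j, hj, hzj⟩ := List.mem_iff_getElem.mp hzq
    by_cases hj1 : j + 1 < q.length
    · have e1 := (promote_on_suffix hcL).1 j hj1
      have e2 := (promote_on_suffix hcL').1 j hj1
      rw [hzj] at e1 e2
      rw [e1, e2, hO _ (hqX _ (List.getElem_mem hj1))]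
    · have hq : q ≠ [] := by
        intro h; subst h; simp at hj
      have hlast : q.getLast hq = z := by
        rw [List.getLast_eq_getElem]
        have hlj : q.length - 1 = j := by omega
        simp only [hlj]
        exact hzj
      have e1 := (promote_on_suffix hcL).2 hq
      have e2 := (promote_on_suffix hcL').2 hq
      rw [hlast] at e1 e2
      rw [e1, e2]
  · have h1 : z ∉ chainOf L := by
      rw [hcL, List.mem_append]
      rintro (h | h)
      · exact hz (hpX z h)
      · exact hzq h
    have h2 : z ∉ chainOf L' := by
      rw [hcL', List.mem_append]
      rintro (h | h)
      · exact hz (hp'X z h)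
      · exact hzq h
    rw [promote_apply_not_mem L h1, promote_apply_not_mem L' h2, hO _ hz]

/-- one promotion step preserves agreement outside `X` -/
lemma promote_congr (hX : X = {y : P | y < x}) {A B : Set P}
    (hGSA : GoodSide x X A) (hGSB : GoodSide x X B) (hunion : A ∪ B = X)
    {L L' : Labeling P} (hO : ∀ z ∉ X, L' z = L z) :
    ∀ z ∉ X, promote L' z = promote L z := by
  rcases chain_split hX hGSA hGSB hunion L with ⟨h0, hc⟩ | ⟨h0, p, hpX, hc⟩
  · have h0' : L'.symm (zer P) = L.symm (zer P) := z0_congr hX hO h0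
    have hc' : chainOf L' = [] ++ promChainFrom L (L.symm (zer P)) := by
      rw [chainOf, h0', List.nil_append, ← pcf_congr hX hO _ h0]
    exact promote_congr_core hc hc' (by simp) (by simp)
      (chainO_notX hX L _ h0) hO
  · have h0' : L'.symm (zer P) ∈ X := z0_memX_congr hX hO h0
    rcases chain_split hX hGSA hGSB hunion L' with ⟨h0'', _⟩ | ⟨_, p', hp'X, hc'⟩
    · exact absurd h0' h0''
    · have hq : promChainFrom L' (uStar L' x) = promChainFrom L (uStar L x) := by
        rw [uStar_congr hX hO, ← pcf_congr hX hO _ (uStar_not_memX hX L)]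
      rw [hq] at hc'
      exact promote_congr_core hc hc' hpX hp'X
        (chainO_notX hX L _ (uStar_not_memX hX L)) hO

end Step

section Backward

variable [Nonempty P] {x : P} {X : Set P}

/-- the backward value map: traces which value at the previous step occupied
(the same side as) the position of value `w` after one promotion. -/
def bwStep (x : P) (X : Set P) (L : Labeling P) (w : Fin (Fintype.card P)) :
    Fin (Fintype.card P) :=
  if L.symm (zer P) ∈ X ∧ w = rS P (mVal L x) then zer P else (rS P).symm w

lemma bwStep_spec_side (hX : X = {y : P | y < x}) {S : Set P}
    (hGS : GoodSide x X S) {L : Labeling P} (h0 : L.symm (zer P) ∈ S)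
    {w : Fin (Fintype.card P)} {e : P} (hedef : (promote L).symm w = e)
    (he : e ∈ X) :
    (e ∈ S ∧ L.symm (bwStep x X L w) ∈ S) ∨ L.symm (bwStep x X L w) = e := by
  have hw : promote L e = w := by rw [← hedef, Equiv.apply_symm_apply]
  obtain ⟨p, hpne, hpS, hc0⟩ := decompS hX hGS L _ h0
  have hc : chainOf L = p ++ promChainFrom L (uStar L x) := hc0
  generalize hqdef : promChainFrom L (uStar L x) = q at hc
  have hqX : ∀ z ∈ q, z ∉ X := hqdef ▸ chainO_notX hX L _ (uStar_not_memX hX L)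
  have hqne : q ≠ [] := hqdef ▸ promChainFrom_ne_nil L _
  have hq0 : ∀ h : 0 < q.length, q[0] = uStar L x := by
    intro h
    obtain ⟨t, ht⟩ := promChainFrom_cons L (uStar L x)
    rw [ht] at hqdef
    subst hqdef
    rfl
  have hlen : (chainOf L).length = p.length + q.length := by
    rw [hc, List.length_append]
  have hqlen : 0 < q.length := List.length_pos_iff.mpr hqne
  by_cases hec : e ∈ chainOf L
  · -- `e` lies in the `S`-part of the chain
    have hep : e ∈ p := by
      rcases List.mem_append.mp (by rw [← hc]; exact hec) with h | h
      · exact h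
      · exact absurd he (hqX e h)
    have heS : e ∈ S := hpS e hep
    obtain ⟨i, hi, hie⟩ := List.mem_iff_getElem.mp hep
    have hci : (chainOf L)[i]'(by omega) = e := by
      rw [List.getElem_of_eq hc, List.getElem_append_left hi]
      exact hie
    have hi1 : i + 1 < (chainOf L).length := by omega
    have hwv : w = rS P (L ((chainOf L)[i+1])) := by
      rw [← hw, ← hci, promote_apply_getElem L i hi1]
    by_cases hip : i + 1 < p.length
    · -- parent within the side
      have hcp : (chainOf L)[i+1] = p[i+1] := by
        rw [List.getElem_of_eq hc, List.getElem_append_left hip]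
      have hpS' : p[i+1] ∈ S := hpS _ (List.getElem_mem hip)
      have hcond : ¬(L.symm (zer P) ∈ X ∧ w = rS P (mVal L x)) := by
        rintro ⟨-, hwm⟩
        have h1 : L p[i+1] = mVal L x := by
          apply (rS P).injective
          rw [← hcp, ← hwv]
          exact hwm
        have h2 : p[i+1] = uStar L x := by
          have := congrArg L.symm h1
          rwa [Equiv.symm_apply_apply] at this
        exact (uStar_not_memX hX L) (h2 ▸ hGS.1 hpS')
      left
      refine ⟨heS, ?_⟩
      rw [bwStep, if_neg hcond, hwv, hcp, Equiv.symm_apply_apply,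
        Equiv.symm_apply_apply]
      exact hpS'
    · -- parent is the start of the chain (the inserted value case)
      have hip' : i + 1 = p.length := by omega
      have hcp : (chainOf L)[i+1] = uStar L x := by
        rw [List.getElem_of_eq hc, List.getElem_append_right (by omega)]
        rw [← hq0 hqlen]
        simp only [show i + 1 - p.length = 0 from by omega]
      have hwm : w = rS P (mVal L x) := by
        rw [hwv, hcp, L_uStar]
      left
      refine ⟨heS, ?_⟩
      rw [bwStep, if_pos ⟨hGS.1 h0, hwm⟩]
      exact h0
  · -- `e` is not on the chain: the same element held the previous value
    have hwv : w = rS P (L e) := by rw [← hw, promote_apply_not_mem L hec]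
    have hcond : ¬(L.symm (zer P) ∈ X ∧ w = rS P (mVal L x)) := by
      rintro ⟨-, hwm⟩
      have h1 : L e = mVal L x := by
        apply (rS P).injective
        rw [← hwv]
        exact hwm
      have h2 : e = uStar L x := by
        have := congrArg L.symm h1
        rwa [Equiv.symm_apply_apply] at this
      exact (uStar_not_memX hX L) (h2 ▸ he)
    right
    rw [bwStep, if_neg hcond, hwv, Equiv.symm_apply_apply, Equiv.symm_apply_apply]

lemma bwStep_spec (hX : X = {y : P | y < x}) {A B : Set P}
    (hGSA : GoodSide x X A) (hGSB : GoodSide x X B) (hunion : A ∪ B = X)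
    (hdisj : Disjoint A B) {L : Labeling P}
    {w : Fin (Fintype.card P)} (he : (promote L).symm w ∈ X) :
    L.symm (bwStep x X L w) ∈ X ∧
      ((promote L).symm w ∈ A ↔ L.symm (bwStep x X L w) ∈ A) := by
  obtain ⟨e, hedef⟩ : ∃ e, (promote L).symm w = e := ⟨_, rfl⟩
  rw [hedef] at he ⊢
  by_cases h0 : L.symm (zer P) ∈ X
  · have h0' : L.symm (zer P) ∈ A ∪ B := by rw [hunion]; exact h0
    rcases h0' with hA | hB
    · rcases bwStep_spec_side hX hGSA hA hedef he with ⟨h1, h2⟩ | hEq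
      · exact ⟨hGSA.1 h2, by simp [h1, h2]⟩
      · rw [hEq]; exact ⟨he, Iff.rfl⟩
    · rcases bwStep_spec_side hX hGSB hB hedef he with ⟨h1, h2⟩ | hEq
      · refine ⟨hGSB.1 h2, ?_⟩
        constructor
        · intro hA1
          exact absurd rfl (hdisj.ne_of_mem hA1 h1)
        · intro hA2
          exact absurd rfl (hdisj.ne_of_mem hA2 h2)
      · rw [hEq]; exact ⟨he, Iff.rfl⟩
  · -- the chain avoids `X`: values on `X` simply shift
    have hec : e ∉ chainOf L := by
      intro hc
      exact (chainO_notX hX L _ h0 _ hc) he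
    have hw : promote L e = w := by rw [← hedef, Equiv.apply_symm_apply]
    have hwv : w = rS P (L e) := by rw [← hw, promote_apply_not_mem L hec]
    have hcond : ¬(L.symm (zer P) ∈ X ∧ w = rS P (mVal L x)) := fun h => h0 h.1
    have heq : L.symm (bwStep x X L w) = e := by
      rw [bwStep, if_neg hcond, hwv, Equiv.symm_apply_apply, Equiv.symm_apply_apply]
    rw [heq]
    exact ⟨he, Iff.rfl⟩

/-- `bwStep` only depends on the labeling outside `X` -/
lemma bwStep_congr (hX : X = {y : P | y < x}) {L L' : Labeling P}
    (hO : ∀ z ∉ X, L' z = L z) : bwStep x X L' = bwStep x X L := by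
  funext w
  have hm : mVal L' x = mVal L x := mVal_congr hX hO
  have hz : (L'.symm (zer P) ∈ X) ↔ (L.symm (zer P) ∈ X) := by
    constructor
    · intro h
      by_contra h'
      exact h' (z0_congr hX hO h' ▸ h)
    · intro h
      exact z0_memX_congr hX hO h
  rw [bwStep, bwStep, hm]
  by_cases hc : L.symm (zer P) ∈ X ∧ w = rS P (mVal L x)
  · rw [if_pos hc, if_pos ⟨hz.mpr hc.1, hc.2⟩]
  · rw [if_neg hc, if_neg (fun h => hc ⟨hz.mp h.1, h.2⟩)]

end Backward

section Seed

variable [Nonempty P] {x : P} {X : Set P}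

lemma iter_congr (hX : X = {y : P | y < x}) {A B : Set P}
    (hGSA : GoodSide x X A) (hGSB : GoodSide x X B) (hunion : A ∪ B = X)
    {L L' : Labeling P} (hO : ∀ z ∉ X, L' z = L z) :
    ∀ k, ∀ z ∉ X, (promote^[k] L') z = (promote^[k] L) z := by
  intro k
  induction k with
  | zero => simpa using hO
  | succ k ih =>
    intro z hz
    rw [Function.iterate_succ_apply', Function.iterate_succ_apply']
    exact promote_congr hX hGSA hGSB hunion ih z hz

/-- the backward sequence of traced values, relative to a reference labeling -/
def seedSeq (x : P) (X : Set P) (Lr : Labeling P) : ℕ → Fin (Fintype.card P)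
  | 0 => zer P
  | (j+1) => bwStep x X (promote^[Fintype.card P - 1 - (j+1)] Lr) (seedSeq x X Lr j)

/-- the seed value -/
def seedVal (x : P) (X : Set P) (Lr : Labeling P) : Fin (Fintype.card P) :=
  seedSeq x X Lr (Fintype.card P - 1)

lemma seed_spec (hX : X = {y : P | y < x}) {A B : Set P}
    (hGSA : GoodSide x X A) (hGSB : GoodSide x X B) (hunion : A ∪ B = X)
    (hdisj : Disjoint A B) {Lr L : Labeling P} (hO : ∀ z ∉ X, L z = Lr z)
    (hL : (promote^[Fintype.card P - 1] L).symm (zer P) ∈ X) :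
    ∀ j, j ≤ Fintype.card P - 1 →
      (promote^[Fintype.card P - 1 - j] L).symm (seedSeq x X Lr j) ∈ X ∧
      ((promote^[Fintype.card P - 1 - j] L).symm (seedSeq x X Lr j) ∈ A ↔
        (promote^[Fintype.card P - 1] L).symm (zer P) ∈ A) := by
  intro j
  induction j with
  | zero =>
    intro _
    simp only [Nat.sub_zero]
    exact ⟨hL, Iff.rfl⟩
  | succ j ih =>
    intro hj
    obtain ⟨ih1, ih2⟩ := ih (by omega)
    have hk : Fintype.card P - 1 - j = (Fintype.card P - 1 - (j+1)) + 1 := by omega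
    rw [hk, Function.iterate_succ_apply'] at ih1 ih2
    have hb := bwStep_spec hX hGSA hGSB hunion hdisj
      (L := promote^[Fintype.card P - 1 - (j+1)] L) (w := seedSeq x X Lr j) ih1
    have hcongr : bwStep x X (promote^[Fintype.card P - 1 - (j+1)] L)
        = bwStep x X (promote^[Fintype.card P - 1 - (j+1)] Lr) := by
      apply bwStep_congr hX
      intro z hz
      exact (iter_congr hX hGSA hGSB hunion hO _ z hz)
    rw [hcongr] at hb
    have hseed : seedSeq x X Lr (j+1)
        = bwStep x X (promote^[Fintype.card P - 1 - (j+1)] Lr) (seedSeq x X Lr j) := rfl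
    rw [hseed]
    exact ⟨hb.1, (hb.2.symm.trans ih2)⟩

lemma seed_main (hX : X = {y : P | y < x}) {A B : Set P}
    (hGSA : GoodSide x X A) (hGSB : GoodSide x X B) (hunion : A ∪ B = X)
    (hdisj : Disjoint A B) {Lr L : Labeling P} (hO : ∀ z ∉ X, L z = Lr z)
    (hL : (promote^[Fintype.card P - 1] L).symm (zer P) ∈ X) :
    L.symm (seedVal x X Lr) ∈ X ∧
      (L.symm (seedVal x X Lr) ∈ A ↔
        (promote^[Fintype.card P - 1] L).symm (zer P) ∈ A) := by
  have := seed_spec hX hGSA hGSB hunion hdisj hO hL (Fintype.card P - 1) le_rfl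
  simpa [seedVal] using this

end Seed

section Counting

variable {α β : Type*} [Fintype α] [Fintype β]

/-- restrict an equivalence with `f a = b` to the punctured types -/
def restrictPunct (f : α ≃ β) {a : α} {b : β} (hf : f a = b) :
    {x : α // x ≠ a} ≃ {y : β // y ≠ b} where
  toFun x := ⟨f x, fun h => x.2 (f.injective (by rw [h, hf]))⟩
  invFun y := ⟨f.symm y, fun h => y.2 (by
    have h2 := congrArg f h
    rwa [Equiv.apply_symm_apply, hf] at h2)⟩
  left_inv x := Subtype.ext (f.symm_apply_apply x)
  right_inv y := Subtype.ext (f.apply_symm_apply y)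

/-- extend an equivalence of punctured types by `a ↦ b` -/
def extendPunct (a : α) (b : β) (g : {x : α // x ≠ a} ≃ {y : β // y ≠ b}) : α ≃ β where
  toFun x := if h : x = a then b else (g ⟨x, h⟩ : β)
  invFun y := if h : y = b then a else (g.symm ⟨y, h⟩ : α)
  left_inv x := by
    by_cases h : x = a
    · simp [h]
    · dsimp only
      rw [dif_neg h, dif_neg (g ⟨x, h⟩).2]
      have h2 : (⟨(g ⟨x, h⟩ : β), (g ⟨x, h⟩).2⟩ : {y : β // y ≠ b}) = g ⟨x, h⟩ := rfl
      rw [h2, Equiv.symm_apply_apply]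
  right_inv y := by
    by_cases h : y = b
    · simp [h]
    · dsimp only
      rw [dif_neg h, dif_neg (g.symm ⟨y, h⟩).2]
      have h2 : (⟨(g.symm ⟨y, h⟩ : α), (g.symm ⟨y, h⟩).2⟩ : {x : α // x ≠ a})
          = g.symm ⟨y, h⟩ := rfl
      rw [h2, Equiv.apply_symm_apply]

lemma apply_of_symm_eq {f : α ≃ β} {a : α} {b : β} (hf : f.symm b = a) : f a = b := by
  have h := congrArg f hf
  rw [Equiv.apply_symm_apply] at h
  exact h.symm

/-- the fiber of equivalences sending `a` to `b` -/
def fiberEquiv (a : α) (b : β) :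
    {f : α ≃ β // f.symm b = a} ≃ ({x : α // x ≠ a} ≃ {y : β // y ≠ b}) where
  toFun fh := restrictPunct fh.1 (apply_of_symm_eq fh.2)
  invFun g := ⟨extendPunct a b g, by
    rw [Equiv.symm_apply_eq]
    show b = if h : a = a then b else (g ⟨a, h⟩ : β)
    rw [dif_pos rfl]⟩
  left_inv fh := by
    apply Subtype.ext
    apply Equiv.ext
    intro z
    show (if h : z = a then b else ((restrictPunct fh.1 (apply_of_symm_eq fh.2)) ⟨z, h⟩ : β))
      = fh.1 z
    by_cases h : z = a
    · subst h
      rw [dif_pos rfl, apply_of_symm_eq fh.2]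
    · rw [dif_neg h]
      rfl
  right_inv g := by
    apply Equiv.ext
    intro z
    apply Subtype.ext
    exact dif_neg z.2

/-- decomposition over the landing point -/
def partEquiv (b : β) (s : Set α) :
    {f : α ≃ β // f.symm b ∈ s} ≃ (Σ a : s, {f : α ≃ β // f.symm b = ↑a}) where
  toFun fh := ⟨⟨fh.1.symm b, fh.2⟩, fh.1, rfl⟩
  invFun p := ⟨p.2.1, by rw [p.2.2]; exact p.1.2⟩
  left_inv fh := rfl
  right_inv p := by
    obtain ⟨⟨av, ha⟩, f, hf⟩ := p
    dsimp at hf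
    subst hf
    rfl

lemma card_fiber (hcard : Fintype.card α = Fintype.card β) (a : α) (b : β) :
    Nat.card {f : α ≃ β // f.symm b = a} = (Fintype.card α - 1).factorial := by
  rw [Nat.card_congr (fiberEquiv a b), Nat.card_eq_fintype_card]
  have h1 : Fintype.card {x : α // x ≠ a} = Fintype.card α - 1 :=
    Fintype.card_subtype_compl fun x => x = a
  have h2 : Fintype.card {y : β // y ≠ b} = Fintype.card β - 1 :=
    Fintype.card_subtype_compl fun y => y = b
  have h3 : Fintype.card {x : α // x ≠ a} = Fintype.card {y : β // y ≠ b} := by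
    rw [h1, h2, hcard]
  rw [Fintype.card_equiv (Fintype.equivOfCardEq h3), h1]

lemma card_equiv_symm_mem (hcard : Fintype.card α = Fintype.card β)
    (b : β) (s : Set α) :
    Nat.card {f : α ≃ β // f.symm b ∈ s} =
      Nat.card s * (Fintype.card α - 1).factorial := by
  rw [Nat.card_congr (partEquiv b s), Nat.card_eq_fintype_card, Fintype.card_sigma]
  have hsum : ∀ a : s, Fintype.card {f : α ≃ β // f.symm b = ↑a}
      = (Fintype.card α - 1).factorial := by
    intro a
    rw [← Nat.card_eq_fintype_card]
    exact card_fiber hcard (↑a) b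
  rw [Finset.sum_congr rfl (fun a _ => hsum a), Finset.sum_const, smul_eq_mul,
    Finset.card_univ, ← Nat.card_eq_fintype_card]

end Counting

section Glue

variable {X : Set P} {M : P → Fin (Fintype.card P)}

/-- labelings extending `M` off `X` correspond to bijections from `X` to the
complementary values -/
def extEquiv (X : Set P) (M : P → Fin (Fintype.card P)) (hMinj : Set.InjOn M Xᶜ) :
    {L : Labeling P // ∀ z ∉ X, L z = M z} ≃ (↥X ≃ ↥((M '' Xᶜ)ᶜ)) where
  toFun L :=
    { toFun := fun e => ⟨L.1 e, by
        rintro ⟨z, hz, hMz⟩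
        have : L.1 z = L.1 ↑e := by rw [← L.2 z hz] at hMz; exact hMz
        exact hz (L.1.injective this ▸ e.2)⟩
      invFun := fun v => ⟨L.1.symm v, by
        by_contra h
        have : (↑v : Fin (Fintype.card P)) = M (L.1.symm ↑v) := by
          rw [← L.2 _ h, Equiv.apply_symm_apply]
        exact v.2 ⟨L.1.symm ↑v, h, this.symm⟩⟩
      left_inv := fun e => Subtype.ext (L.1.symm_apply_apply ↑e)
      right_inv := fun v => Subtype.ext (L.1.apply_symm_apply ↑v) }
  invFun f := by
    refine ⟨Equiv.ofBijective (fun z => if h : z ∈ X then ↑(f ⟨z, h⟩) else M z) ?_, ?_⟩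
    · rw [Fintype.bijective_iff_injective_and_card]
      refine ⟨?_, by simp⟩
      intro z1 z2 h12
      dsimp only at h12
      by_cases h1 : z1 ∈ X <;> by_cases h2 : z2 ∈ X
      · rw [dif_pos h1, dif_pos h2] at h12
        have := f.injective (Subtype.ext h12)
        exact congrArg Subtype.val this
      · rw [dif_pos h1, dif_neg h2] at h12
        exact absurd ⟨z2, h2, h12.symm⟩ (f ⟨z1, h1⟩).2
      · rw [dif_neg h1, dif_pos h2] at h12
        exact absurd ⟨z1, h1, h12⟩ (f ⟨z2, h2⟩).2
      · rw [dif_neg h1, dif_neg h2] at h12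
        exact hMinj h1 h2 h12
    · intro z hz
      show (if h : z ∈ X then _ else M z) = M z
      rw [dif_neg hz]
  left_inv L := by
    apply Subtype.ext
    apply Equiv.ext
    intro z
    by_cases h : z ∈ X
    · exact dif_pos h
    · exact (dif_neg h).trans (L.2 z h).symm
  right_inv f := by
    apply Equiv.ext
    intro e
    apply Subtype.ext
    exact dif_pos e.2

end Glue

end Stmt16

open Stmt16

/-- Let `X = {y : y <_P x}` be nonempty, with every element comparable
with some element of `X` comparable with `x`, and let `X = A ∪ B` be a partition
with no element of `A` comparable to any element of `B`.  Fix `M`, injective on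
`P ∖ X`, such that every labeling `L` extending `M` satisfies
`(∂^{N−1} L)⁻¹(1) ∈ X`.  Then the number of labelings `L` extending `M` with
`(∂^{N−1} L)⁻¹(1) ∈ A` is `|A| · (|X| − 1)!` (equivalently, among the `|X|!`
labelings extending `M`, the probability of landing in `A` is `|A|/|X|`). -/
theorem card_extensions_landing_in_A (x : P) (X : Set P) (hX : X = {y : P | y < x})
    (hne : X.Nonempty)
    (hcomp : ∀ z : P, (∃ w ∈ X, z ≤ w ∨ w ≤ z) → (z ≤ x ∨ x ≤ z))
    (A B : Set P) (hunion : A ∪ B = X) (hdisj : Disjoint A B)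
    (hinc : ∀ a ∈ A, ∀ b ∈ B, ¬ (a ≤ b ∨ b ≤ a))
    (M : P → Fin (Fintype.card P)) (hMinj : Set.InjOn M Xᶜ)
    (hM : ∀ L : Labeling P, (∀ z ∉ X, L z = M z) →
      (promote^[Fintype.card P - 1] L).symm
        ⟨0, Fintype.card_pos_iff.mpr ⟨hne.choose⟩⟩ ∈ X) :
    Nat.card {L : Labeling P // (∀ z ∉ X, L z = M z) ∧
        (promote^[Fintype.card P - 1] L).symm
          ⟨0, Fintype.card_pos_iff.mpr ⟨hne.choose⟩⟩ ∈ A} =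
      Nat.card A * Nat.factorial (Nat.card X - 1) := by
  classical
  have hP : Nonempty P := ⟨x⟩
  have hGSA : GoodSide x X A := goodSide_left hX hcomp hunion hinc
  have hGSB : GoodSide x X B :=
    goodSide_left hX hcomp (by rw [Set.union_comm]; exact hunion)
      (fun b hb a ha h => hinc a ha b hb (Or.symm h))
  have hAsub : A ⊆ X := hGSA.1
  have hM' : ∀ L : Labeling P, (∀ z ∉ X, L z = M z) →
      (promote^[Fintype.card P - 1] L).symm (zer P) ∈ X := hM
  have hVX : Fintype.card ↥X = Fintype.card ↥((M '' Xᶜ)ᶜ) := by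
    rw [← Nat.card_eq_fintype_card, ← Nat.card_eq_fintype_card,
      Nat.card_coe_set_eq, Nat.card_coe_set_eq]
    have h1 : (M '' Xᶜ).ncard + (M '' Xᶜ)ᶜ.ncard = Nat.card (Fin (Fintype.card P)) :=
      Set.ncard_add_ncard_compl _
    have h2 : (M '' Xᶜ).ncard = Xᶜ.ncard := Set.ncard_image_of_injOn hMinj
    have h3 : X.ncard + Xᶜ.ncard = Nat.card P := Set.ncard_add_ncard_compl _
    have h4 : Nat.card (Fin (Fintype.card P)) = Nat.card P := by
      rw [Nat.card_eq_fintype_card, Nat.card_eq_fintype_card, Fintype.card_fin]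
    omega
  have E := extEquiv X M hMinj
  obtain ⟨Lr, hLrext⟩ : ∃ L : Labeling P, ∀ z ∉ X, L z = M z :=
    ⟨((extEquiv X M hMinj).symm (Fintype.equivOfCardEq hVX)).1,
      ((extEquiv X M hMinj).symm (Fintype.equivOfCardEq hVX)).2⟩
  have hkey : ∀ L : Labeling P, (∀ z ∉ X, L z = M z) →
      (L.symm (seedVal x X Lr) ∈ X ∧
        (L.symm (seedVal x X Lr) ∈ A ↔
          (promote^[Fintype.card P - 1] L).symm (zer P) ∈ A)) := by
    intro L hext
    exact seed_main hX hGSA hGSB hunion hdisj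
      (fun z hz => (hext z hz).trans (hLrext z hz).symm) (hM' L hext)
  have hwV : seedVal x X Lr ∈ (M '' Xᶜ)ᶜ := by
    have h1 := (hkey Lr hLrext).1
    rintro ⟨z, hz, hMz⟩
    have h2 : Lr z = seedVal x X Lr := (hLrext z hz).trans hMz
    have h3 : Lr.symm (seedVal x X Lr) = z := by
      rw [← h2, Equiv.symm_apply_apply]
    rw [h3] at h1
    exact hz h1
  have e1 : {L : Labeling P // (∀ z ∉ X, L z = M z) ∧
        (promote^[Fintype.card P - 1] L).symm
          ⟨0, Fintype.card_pos_iff.mpr ⟨hne.choose⟩⟩ ∈ A}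
      ≃ {L : Labeling P // (∀ z ∉ X, L z = M z) ∧ L.symm (seedVal x X Lr) ∈ A} :=
    Equiv.subtypeEquivRight (fun L =>
      and_congr_right fun hext => ((hkey L hext).2).symm)
  have e2 : {L : Labeling P // (∀ z ∉ X, L z = M z) ∧ L.symm (seedVal x X Lr) ∈ A}
      ≃ {p : {L : Labeling P // ∀ z ∉ X, L z = M z} // p.1.symm (seedVal x X Lr) ∈ A} :=
    (Equiv.subtypeSubtypeEquivSubtypeInter
      (fun L : Labeling P => ∀ z ∉ X, L z = M z)
      (fun L => L.symm (seedVal x X Lr) ∈ A)).symm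
  have e3 : {p : {L : Labeling P // ∀ z ∉ X, L z = M z} //
        p.1.symm (seedVal x X Lr) ∈ A}
      ≃ {f : ↥X ≃ ↥((M '' Xᶜ)ᶜ) //
          f.symm ⟨seedVal x X Lr, hwV⟩ ∈ {e : ↥X | (e : P) ∈ A}} :=
    Equiv.subtypeEquiv (extEquiv X M hMinj) (fun p => Iff.rfl)
  have sEquiv : {e : ↥X // (e : P) ∈ A} ≃ ↥A :=
    { toFun := fun e => ⟨↑e.1, e.2⟩
      invFun := fun a => ⟨⟨↑a, hAsub a.2⟩, a.2⟩
      left_inv := fun e => Subtype.ext (Subtype.ext rfl)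
      right_inv := fun a => rfl }
  rw [Nat.card_congr (e1.trans (e2.trans e3)),
    card_equiv_symm_mem hVX ⟨seedVal x X Lr, hwV⟩ {e : ↥X | (e : P) ∈ A}]
  have h5 : Nat.card ↑{e : ↥X | (e : P) ∈ A} = Nat.card A := Nat.card_congr sEquiv
  rw [h5, (Nat.card_eq_fintype_card (α := ↥X)).symm]

end
end
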